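/- arXiv:0712.3023 — 8 statements merged into one kernel-verified Lean document; each statement's English description precedes it below -/
import Mathlib

section
/- Let f : ℝ → ℝ be continuous and let V be a nonempty bounded open interval such that f^n(∂V) ∩ V = ∅ for every n ≥ 1 (V is a 'nice' interval). Let 0 ≤ k < l be integers, let A be a connected component of f^{−k}(V) (the preimage of V under the k-th iterate f^k) and let B be a connected component of f^{−l}(V). Then ∂A ∩ B = ∅. -/
theorem nice_interval_preimage_components_boundary_disjoint
    (f : ℝ → ℝ) (hf : Continuous f) (a b : ℝ) (hab : a < b)
    (V : Set ℝ) (hV : V = Set.Ioo a b)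
    (hnice : ∀ n : ℕ, 1 ≤ n → (f^[n] '' frontier V) ∩ V = ∅)
    (k l : ℕ) (hkl : k < l)
    (A B : Set ℝ)
    (hA : ∃ x ∈ f^[k] ⁻¹' V, A = connectedComponentIn (f^[k] ⁻¹' V) x)
    (hB : ∃ x ∈ f^[l] ⁻¹' V, B = connectedComponentIn (f^[l] ⁻¹' V) x) :
    frontier A ∩ B = ∅ := by
  obtain ⟨x0, hx0, rfl⟩ := hA
  obtain ⟨y0, hy0, rfl⟩ := hB
  have hVopen : IsOpen V := hV ▸ isOpen_Ioo
  have hUk : IsOpen (f^[k] ⁻¹' V) := hVopen.preimage (hf.iterate k)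
  ext x
  simp only [Set.mem_inter_iff, Set.mem_empty_iff_false, iff_false, not_and]
  intro hxf hxB
  have hxcl : x ∈ closure (f^[k] ⁻¹' V) :=
    closure_mono (connectedComponentIn_subset _ _) (frontier_subset_closure hxf)
  have h1 : f^[k] x ∈ closure V := (hf.iterate k).closure_preimage_subset V hxcl
  have h2 : f^[k] x ∉ V := by
    intro hmem
    have hxU : x ∈ f^[k] ⁻¹' V := hmem
    have hopen : IsOpen (connectedComponentIn (f^[k] ⁻¹' V) x) := hUk.connectedComponentIn
    have hAopen : IsOpen (connectedComponentIn (f^[k] ⁻¹' V) x0) := hUk.connectedComponentIn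
    have hxnA : x ∉ connectedComponentIn (f^[k] ⁻¹' V) x0 := by
      rw [hAopen.frontier_eq] at hxf
      exact hxf.2
    have hne : (connectedComponentIn (f^[k] ⁻¹' V) x ∩
        connectedComponentIn (f^[k] ⁻¹' V) x0).Nonempty := by
      have := mem_closure_iff.mp (frontier_subset_closure hxf) _ hopen
        (mem_connectedComponentIn hxU)
      exact this
    obtain ⟨z, hz1, hz2⟩ := hne
    have heq := (connectedComponentIn_eq hz1).trans (connectedComponentIn_eq hz2).symm
    exact hxnA (heq ▸ mem_connectedComponentIn hxU)
  have hfr : f^[k] x ∈ frontier V := by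
    rw [hVopen.frontier_eq]
    exact ⟨h1, h2⟩
  have hlx : f^[l] x ∈ V := connectedComponentIn_subset (f^[l] ⁻¹' V) y0 hxB
  have himg : f^[l] x ∈ f^[l - k] '' frontier V :=
    ⟨f^[k] x, hfr, by rw [← Function.iterate_add_apply, Nat.sub_add_cancel hkl.le]⟩
  exact Set.eq_empty_iff_forall_notMem.mp (hnice (l - k) (by omega)) _ ⟨himg, hlx⟩
end

section
/- Let f : ℝ → ℝ be continuous and let V be a nonempty bounded open interval such that f^n(∂V) ∩ V = ∅ for every n ≥ 1 (V is a 'nice' interval). Let D = {x ∈ V : there exists n ≥ 1 with f^n(x) ∈ V} be the domain of the first return map to V, and for x ∈ D let r(x) = min{n ≥ 1 : f^n(x) ∈ V} be the first return time. Then r is constant on each connected component of D. -/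
lemma exists_frontier_mem {s V : Set ℝ} (hs : IsPreconnected s) (hVo : IsOpen V)
    (hu : ∃ u ∈ s, u ∈ V) (hw : ∃ w ∈ s, w ∉ V) : ∃ p ∈ s, p ∈ frontier V := by
  by_contra h
  push_neg at h
  have hsub : s ⊆ V ∪ (closure V)ᶜ := by
    intro p hp
    rcases Classical.em (p ∈ V) with hpV | hpV
    · exact Or.inl hpV
    · refine Or.inr fun hc => h p hp ⟨hc, fun hi => hpV ?_⟩
      rwa [hVo.interior_eq] at hi
  have hdisj : V ∩ (closure V)ᶜ = ∅ := by
    ext p; simp only [Set.mem_inter_iff, Set.mem_compl_iff, Set.mem_empty_iff_false, iff_false]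
    rintro ⟨h1, h2⟩; exact h2 (subset_closure h1)
  obtain ⟨u, hus, huV⟩ := hu
  obtain ⟨w, hws, hwV⟩ := hw
  rcases (IsPreconnected.subset_or_subset hVo isClosed_closure.isOpen_compl
      (by rw [Set.disjoint_iff_inter_eq_empty]; exact hdisj) hsub hs) with hc | hc
  · exact hwV (hc hws)
  · exact (hc hus) (subset_closure huV)

theorem return_time_constant_on_components
    (f : ℝ → ℝ) (hf : Continuous f) (a b : ℝ) (hab : a < b)
    (V : Set ℝ) (hV : V = Set.Ioo a b)
    (hnice : ∀ n : ℕ, 1 ≤ n → (f^[n] '' frontier V) ∩ V = ∅)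
    (D : Set ℝ) (hD : D = {x ∈ V | ∃ n : ℕ, 1 ≤ n ∧ f^[n] x ∈ V})
    (r : ℝ → ℕ) (hr : ∀ x ∈ D, r x = sInf {n : ℕ | 1 ≤ n ∧ f^[n] x ∈ V}) :
    ∀ x ∈ D, ∀ y ∈ D, y ∈ connectedComponentIn D x → r x = r y := by
  intro x hx y hy hyc
  have hVo : IsOpen V := hV ▸ isOpen_Ioo
  -- basic facts about r at a point of D
  have hrmem : ∀ z ∈ D, 1 ≤ r z ∧ f^[r z] z ∈ V := by
    intro z hz
    have hzne : {n : ℕ | 1 ≤ n ∧ f^[n] z ∈ V}.Nonempty := by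
      rw [hD] at hz
      obtain ⟨-, n, hn1, hnV⟩ := hz
      exact ⟨n, hn1, hnV⟩
    have := Nat.sInf_mem hzne
    rw [← hr z hz] at this
    exact this
  have hrmin : ∀ z ∈ D, ∀ m : ℕ, 1 ≤ m → f^[m] z ∈ V → r z ≤ m := by
    intro z hz m hm1 hmV
    rw [hr z hz]
    exact Nat.sInf_le ⟨hm1, hmV⟩
  -- the segment between x and y lies in D
  have hcomp : IsPreconnected (connectedComponentIn D x) :=
    (isConnected_connectedComponentIn_iff.mpr hx).isPreconnected
  have hxc : x ∈ connectedComponentIn D x := mem_connectedComponentIn hx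
  set S : Set ℝ := Set.uIcc x y with hS
  have hSsub : S ⊆ connectedComponentIn D x := hcomp.ordConnected.uIcc_subset hxc hyc
  have hSD : S ⊆ D := hSsub.trans (connectedComponentIn_subset D x)
  have hxS : x ∈ S := Set.left_mem_uIcc
  have hyS : y ∈ S := Set.right_mem_uIcc
  -- minimal k ≥ 1 such that some point of S lands in V
  set K : Set ℕ := {k : ℕ | 1 ≤ k ∧ ∃ z ∈ S, f^[k] z ∈ V} with hK
  have hKne : K.Nonempty := ⟨r x, (hrmem x hx).1, x, hxS, (hrmem x hx).2⟩
  set N : ℕ := sInf K with hNdef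
  obtain ⟨hN1, z0, hz0S, hz0V⟩ := Nat.sInf_mem hKne
  -- f^[N] maps all of S into V
  have hall : ∀ z ∈ S, f^[N] z ∈ V := by
    by_contra h
    push_neg at h
    obtain ⟨w0, hw0S, hw0V⟩ := h
    have himg : IsPreconnected (f^[N] '' S) :=
      (isPreconnected_uIcc).image _ ((hf.iterate N).continuousOn)
    obtain ⟨p, hpS, hpF⟩ := exists_frontier_mem himg hVo
      ⟨f^[N] z0, Set.mem_image_of_mem _ hz0S, hz0V⟩
      ⟨f^[N] w0, Set.mem_image_of_mem _ hw0S, hw0V⟩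
    obtain ⟨w, hwS, rfl⟩ := hpS
    -- w ∈ D, so it returns at time r w
    have hwD : w ∈ D := hSD hwS
    obtain ⟨hrw1, hrwV⟩ := hrmem w hwD
    rcases lt_trichotomy (r w) N with hlt | heq | hgt
    · have : N ≤ r w := Nat.sInf_le (show r w ∈ K from ⟨hrw1, w, hwS, hrwV⟩)
      omega
    · rw [heq] at hrwV
      exact hpF.2 (by rwa [hVo.interior_eq])
    · have : f^[r w] w = f^[r w - N] (f^[N] w) := by
        rw [← Function.iterate_add_apply, Nat.sub_add_cancel hgt.le]
      have hmem : f^[r w] w ∈ (f^[r w - N] '' frontier V) ∩ V :=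
        ⟨⟨f^[N] w, hpF, this.symm⟩, hrwV⟩
      rw [hnice (r w - N) (by omega)] at hmem
      exact hmem
  -- conclude: r x = N = r y
  have h1 : r x ≤ N := hrmin x hx N hN1 (hall x hxS)
  have h2 : N ≤ r x := Nat.sInf_le ⟨(hrmem x hx).1, x, hxS, (hrmem x hx).2⟩
  have h3 : r y ≤ N := hrmin y hy N hN1 (hall y hyS)
  have h4 : N ≤ r y := Nat.sInf_le ⟨(hrmem y hy).1, y, hyS, (hrmem y hy).2⟩
  omega
end

section
/- Let f₄(x) = 4x(1 − x) be the Chebyshev quadratic map on [0,1]. Then every ergodic f₄-invariant Borel probability measure μ on [0,1] other than the Dirac mass δ₀ at the fixed point 0 satisfies: the function x ↦ log|f₄'(x)| = log|4 − 8x| is μ-integrable and the Lyapunov exponent χ_μ = ∫ log|f₄'| dμ equals log 2. -/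
open MeasureTheory Set Filter


noncomputable def clampN (n : ℕ) (t : ℝ) : ℝ := min (max t 0) n

lemma clampN_mono (n : ℕ) {s t : ℝ} (h : s ≤ t) : clampN n s ≤ clampN n t :=
  min_le_min (max_le_max h le_rfl) le_rfl

lemma clampN_lip (n : ℕ) (s t : ℝ) : |clampN n s - clampN n t| ≤ |s - t| := by
  unfold clampN
  rw [abs_le]
  rcases abs_cases (s - t) with ⟨h1, h2⟩ | ⟨h1, h2⟩ <;>
    constructor <;>
    simp only [min_def, max_def] <;> split_ifs <;> linarith

lemma clampN_nonneg (n : ℕ) (t : ℝ) : 0 ≤ clampN n t := le_min (le_max_right _ _) (by positivity)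

lemma clampN_le (n : ℕ) (t : ℝ) : clampN n t ≤ n := min_le_right _ _

lemma clampN_eq (n : ℕ) (t : ℝ) (h0 : 0 ≤ t) (hn : t ≤ n) : clampN n t = t := by
  unfold clampN; rw [max_eq_left h0, min_eq_left hn]

lemma key_integral
    (μ : Measure ℝ) [IsProbabilityMeasure μ] (f : ℝ → ℝ) (hfm : Measurable f)
    (hinv : Measure.map f μ = μ) (a b : ℝ → ℝ) (ha : Measurable a) (hb : Measurable b)
    (hae : ∀ᵐ x ∂μ, 0 ≤ a x ∧ 0 ≤ b x ∧ 0 ≤ a (f x) ∧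
      a (f x) = a x + b x - Real.log 4) :
    Integrable b μ ∧ ∫ x, b x ∂μ = Real.log 4 := by
  set L : ℝ := Real.log 4 with hLdef
  have hL : 0 < L := Real.log_pos (by norm_num)
  set φ : ℕ → ℝ → ℝ := fun n x => clampN n (a x) with hφdef
  have hφm : ∀ n, Measurable (φ n) := fun n =>
    (ha.max measurable_const).min measurable_const
  have hφbd : ∀ n x, ‖φ n x‖ ≤ (n : ℝ) := fun n x => by
    rw [Real.norm_eq_abs, abs_of_nonneg (clampN_nonneg n (a x))]; exact clampN_le n (a x)
  have hφint : ∀ n, Integrable (φ n) μ := fun n =>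
    (integrable_const (n : ℝ)).mono' (hφm n).aestronglyMeasurable
      (Eventually.of_forall (hφbd n))
  have hφfint : ∀ n, Integrable (fun x => φ n (f x)) μ := fun n =>
    (integrable_const (n : ℝ)).mono' ((hφm n).comp hfm).aestronglyMeasurable
      (Eventually.of_forall fun x => hφbd n (f x))
  have hint_eq : ∀ n, ∫ x, φ n (f x) ∂μ = ∫ x, φ n x ∂μ := by
    intro n
    conv_rhs => rw [← hinv]
    rw [integral_map hfm.aemeasurable (hφm n).aestronglyMeasurable]
  set δ : ℕ → ℝ → ℝ := fun n x => φ n (f x) - φ n x with hδdef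
  have hδm : ∀ n, Measurable (δ n) := fun n => ((hφm n).comp hfm).sub (hφm n)
  have hδint : ∀ n, Integrable (δ n) μ := fun n => (hφfint n).sub (hφint n)
  have hδ0 : ∀ n, ∫ x, δ n x ∂μ = 0 := fun n => by
    rw [integral_sub (hφfint n) (hφint n), hint_eq n, sub_self]
  -- pointwise bounds
  have hbound : ∀ n, ∀ᵐ x ∂μ, -L ≤ δ n x ∧ δ n x ≤ b x := by
    intro n
    filter_upwards [hae] with x ⟨h0a, h0b, h0af, hid⟩
    constructor
    · rcases le_total (b x) L with hbl | hbl
      · have h2 := clampN_lip n (a (f x)) (a x)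
        have h3 : |a (f x) - a x| ≤ L := by
          rw [hid, abs_le]; constructor <;> linarith
        have := abs_le.mp (h2.trans h3)
        simp only [hδdef]; linarith [this.1]
      · have : a x ≤ a (f x) := by linarith
        have := clampN_mono n this
        simp only [hδdef]; linarith
    · have h1 : a (f x) ≤ a x + b x := by linarith
      have h2 : clampN n (a (f x)) ≤ clampN n (a x + b x) := clampN_mono n h1
      have h3 := clampN_lip n (a x + b x) (a x)
      have h4 : |a x + b x - a x| = b x := by rw [abs_of_nonneg]; ring_nf; linarith
      rw [h4] at h3
      have := abs_le.mp h3
      simp only [hδdef]; linarith [this.2]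
  have htend : ∀ᵐ x ∂μ, Tendsto (fun n => δ n x) atTop (nhds (b x - L)) := by
    filter_upwards [hae] with x ⟨h0a, h0b, h0af, hid⟩
    obtain ⟨N, hN⟩ := exists_nat_ge (max (a x) (a (f x)))
    refine Tendsto.congr' ?_ tendsto_const_nhds
    rw [EventuallyEq, eventually_atTop]
    refine ⟨N, fun n hn => ?_⟩
    have hn' : (N : ℝ) ≤ n := Nat.cast_le.mpr hn
    have e1 : φ n x = a x := clampN_eq n (a x) h0a (le_trans ((le_max_left _ _).trans hN) hn')
    have e2 : φ n (f x) = a (f x) :=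
      clampN_eq n (a (f x)) h0af (le_trans ((le_max_right _ _).trans hN) hn')
    simp only [hδdef, e1, e2]
    linarith [hid]
  -- Fatou ⇒ integrability of b
  have hgnn : ∀ n, 0 ≤ᵐ[μ] fun x => δ n x + L := fun n => by
    filter_upwards [hbound n] with x hx
    simp only [Pi.zero_apply]; linarith [hx.1]
  have hgint : ∀ n, Integrable (fun x => δ n x + L) μ := fun n =>
    (hδint n).add (integrable_const L)
  have hgval : ∀ n, ∫ x, (δ n x + L) ∂μ = L := fun n => by
    rw [integral_add (hδint n) (integrable_const L), hδ0, integral_const]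
    simp
  have hlin : ∀ n, ∫⁻ x, ENNReal.ofReal (δ n x + L) ∂μ = ENNReal.ofReal L := fun n => by
    rw [← ofReal_integral_eq_lintegral_ofReal (hgint n) (hgnn n), hgval n]
  have hfatou := lintegral_liminf_le
    (f := fun n x => ENNReal.ofReal (δ n x + L)) (u := atTop)
    (fun n => ((hδm n).add_const L).ennreal_ofReal) (μ := μ)
  have hliminf : ∀ᵐ x ∂μ,
      liminf (fun n => ENNReal.ofReal (δ n x + L)) atTop = ENNReal.ofReal (b x) := by
    filter_upwards [htend] with x hx
    have : Tendsto (fun n => ENNReal.ofReal (δ n x + L)) atTop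
        (nhds (ENNReal.ofReal (b x))) := by
      have h1 : Tendsto (fun n => δ n x + L) atTop (nhds (b x)) := by
        have := hx.add_const L
        simpa using this
      exact (ENNReal.continuous_ofReal.tendsto _).comp h1
    exact this.liminf_eq
  have hb_lint : ∫⁻ x, ENNReal.ofReal (b x) ∂μ ≤ ENNReal.ofReal L := by
    calc ∫⁻ x, ENNReal.ofReal (b x) ∂μ
        = ∫⁻ x, liminf (fun n => ENNReal.ofReal (δ n x + L)) atTop ∂μ :=
          (lintegral_congr_ae hliminf).symm
      _ ≤ liminf (fun n => ∫⁻ x, ENNReal.ofReal (δ n x + L) ∂μ) atTop := hfatou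
      _ = ENNReal.ofReal L := by simp [hlin]
  have hbnn : 0 ≤ᵐ[μ] b := by filter_upwards [hae] with x hx; exact hx.2.1
  have hbint : Integrable b μ := by
    refine ⟨hb.aestronglyMeasurable, ?_⟩
    rw [hasFiniteIntegral_iff_ofReal hbnn]
    exact lt_of_le_of_lt hb_lint ENNReal.ofReal_lt_top
  -- dominated convergence ⇒ value
  have hdom := tendsto_integral_of_dominated_convergence (μ := μ)
    (F := δ) (f := fun x => b x - L) (bound := fun x => b x + L)
    (fun n => (hδm n).aestronglyMeasurable)
    (hbint.add (integrable_const L))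
    (fun n => by
      filter_upwards [hbound n, hbnn] with x hx hbx
      simp only [Pi.zero_apply] at hbx
      rw [Real.norm_eq_abs, abs_le]
      constructor <;> [linarith [hx.1]; linarith [hx.2]])
    htend
  have : (0 : ℝ) = ∫ x, (b x - L) ∂μ := by
    refine tendsto_nhds_unique ?_ hdom
    simpa [hδ0] using (tendsto_const_nhds : Tendsto (fun _ : ℕ => (0:ℝ)) atTop (nhds 0))
  rw [integral_sub hbint (integrable_const L), integral_const] at this
  have hμ : μ.real univ = 1 := by simp
  constructor
  · exact hbint
  · rw [hμ] at this; simp at this; linarith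


theorem chebyshev_lyapunov_exponent
    (f₄ : ℝ → ℝ) (hf : ∀ x, f₄ x = 4 * x * (1 - x))
    (μ : Measure ℝ) [IsProbabilityMeasure μ]
    (hsupp : μ (Icc 0 1) = 1)
    (hinv : Measure.map f₄ μ = μ)
    (herg : ∀ E : Set ℝ, MeasurableSet E → f₄ ⁻¹' E = E → μ E = 0 ∨ μ E = 1)
    (hne : μ ≠ Measure.dirac 0) :
    Integrable (fun x => Real.log |4 - 8 * x|) μ ∧
    ∫ x, Real.log |4 - 8 * x| ∂μ = Real.log 2 := by
  have hfm : Measurable f₄ := by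
    have : f₄ = fun x => 4 * x * (1 - x) := funext hf
    rw [this]
    exact ((measurable_id.const_mul 4).mul (measurable_const.sub measurable_id))
  have hf0 : f₄ 0 = 0 := by rw [hf]; ring
  set E : Set ℝ := ⋃ n, f₄^[n] ⁻¹' {0} with hEdef
  have hE_meas : MeasurableSet E :=
    MeasurableSet.iUnion fun n => (hfm.iterate n) (measurableSet_singleton 0)
  have hE_inv : f₄ ⁻¹' E = E := by
    ext x
    simp only [hEdef, mem_preimage, mem_iUnion, mem_singleton_iff]
    constructor
    · rintro ⟨n, hn⟩
      exact ⟨n + 1, by rwa [Function.iterate_succ_apply]⟩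
    · rintro ⟨n, hn⟩
      refine ⟨n, ?_⟩
      rw [← Function.iterate_succ_apply, Function.iterate_succ_apply', hn, hf0]
  have hmap : ∀ A : Set ℝ, MeasurableSet A → μ (f₄ ⁻¹' A) = μ A := by
    intro A hA
    rw [← Measure.map_apply hfm hA, hinv]
  have hiter : ∀ n : ℕ, μ (f₄^[n] ⁻¹' {0}) = μ {0} := by
    intro n
    induction n with
    | zero => simp
    | succ n ih =>
      rw [Function.iterate_succ, Set.preimage_comp,
        hmap _ ((hfm.iterate n) (measurableSet_singleton 0)), ih]
  have hE0 : μ E = 0 := by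
    rcases herg E hE_meas hE_inv with h | h
    · exact h
    · exfalso
      apply hne
      have hmono : Monotone fun n : ℕ => f₄^[n] ⁻¹' ({0} : Set ℝ) := by
        apply monotone_nat_of_le_succ
        intro n x hx
        simp only [mem_preimage, mem_singleton_iff] at *
        rw [Function.iterate_succ_apply', hx, hf0]
      have htend := tendsto_measure_iUnion_atTop (μ := μ) hmono
      have h01 : μ {0} = 1 := by
        have : Tendsto (fun _ : ℕ => μ {0}) atTop (nhds (μ E)) := by
          refine htend.congr fun n => ?_
          exact (hiter n)
        rw [h] at this
        exact tendsto_nhds_unique tendsto_const_nhds this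
      refine Measure.ext fun s hs => ?_
      rw [Measure.dirac_apply' 0 hs]
      by_cases h0s : (0 : ℝ) ∈ s
      · have h1 : (1 : ENNReal) ≤ μ s := h01 ▸ measure_mono (singleton_subset_iff.mpr h0s)
        have h2 : μ s ≤ 1 := prob_le_one
        rw [indicator_of_mem h0s]
        simp [le_antisymm h2 h1]
      · have hsub : s ⊆ ({0} : Set ℝ)ᶜ := fun y hy => by
          simp only [mem_compl_iff, mem_singleton_iff]
          rintro rfl; exact h0s hy
        have hc : μ ({0} : Set ℝ)ᶜ = 0 := by
          rw [measure_compl (measurableSet_singleton 0) (measure_ne_top μ _), h01,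
            measure_univ]
          simp
        rw [indicator_of_notMem h0s]
        exact measure_mono_null hsub hc
  have h0 : μ {(0 : ℝ)} = 0 :=
    measure_mono_null (by intro y hy; simp only [mem_singleton_iff] at hy
                          exact mem_iUnion.mpr ⟨0, by simp [hy]⟩) hE0
  have h1 : μ {(1 : ℝ)} = 0 := by
    refine measure_mono_null ?_ hE0
    intro y hy
    simp only [mem_singleton_iff] at hy
    refine mem_iUnion.mpr ⟨1, ?_⟩
    simp [hy, hf]
  have hhalf : μ {(1 / 2 : ℝ)} = 0 := by
    refine measure_mono_null ?_ hE0
    intro y hy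
    simp only [mem_singleton_iff] at hy
    refine mem_iUnion.mpr ⟨2, ?_⟩
    have e1 : f₄ (1 / 2 : ℝ) = 1 := by rw [hf]; norm_num
    have e2 : f₄ (1 : ℝ) = 0 := by rw [hf]; ring
    have e3 : f₄^[2] (1 / 2 : ℝ) = f₄ (f₄ (1 / 2)) := by
      rw [Function.iterate_succ_apply, Function.iterate_one]
    simp only [mem_preimage, mem_singleton_iff, hy]
    rw [e3, e1, e2]
  have hout : μ (Icc (0:ℝ) 1)ᶜ = 0 := by
    rw [measure_compl measurableSet_Icc (measure_ne_top μ _), hsupp, measure_univ]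
    simp
  have hS : ∀ᵐ x ∂μ, 0 < x ∧ x < 1 ∧ x ≠ 1 / 2 := by
    have hIcc : ∀ᵐ x ∂μ, x ∈ Icc (0:ℝ) 1 := by
      rw [ae_iff]
      exact hout
    have hne0 : ∀ᵐ x ∂μ, x ≠ 0 := by
      rw [ae_iff]; convert h0 using 2; ext y; simp
    have hne1 : ∀ᵐ x ∂μ, x ≠ 1 := by
      rw [ae_iff]; convert h1 using 2; ext y; simp
    have hneh : ∀ᵐ x ∂μ, x ≠ 1 / 2 := by
      rw [ae_iff]; convert hhalf using 2; ext y; simp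
    filter_upwards [hIcc, hne0, hne1, hneh] with x hx hx0 hx1 hxh
    exact ⟨lt_of_le_of_ne hx.1 (Ne.symm hx0), lt_of_le_of_ne hx.2 hx1, hxh⟩
  set a : ℝ → ℝ := fun x => -Real.log x with hadef
  set b : ℝ → ℝ := fun x => -Real.log (1 - x) with hbdef
  have ha : Measurable a := Real.measurable_log.neg
  have hb : Measurable b :=
    (Real.measurable_log.comp (measurable_const.sub measurable_id)).neg
  have hlog4 : Real.log 4 = 2 * Real.log 2 := by
    rw [show (4:ℝ) = 2 ^ 2 by norm_num, Real.log_pow]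
    push_cast; ring
  have hae : ∀ᵐ x ∂μ, 0 ≤ a x ∧ 0 ≤ b x ∧ 0 ≤ a (f₄ x) ∧
      a (f₄ x) = a x + b x - Real.log 4 := by
    filter_upwards [hS] with x ⟨hx0, hx1, _⟩
    have h1x : 0 < 1 - x := by linarith
    have hfx0 : 0 < f₄ x := by rw [hf]; positivity
    have hfx1 : f₄ x ≤ 1 := by rw [hf]; nlinarith [sq_nonneg (1 - 2 * x)]
    refine ⟨?_, ?_, ?_, ?_⟩
    · simp only [hadef, neg_nonneg]
      exact Real.log_nonpos hx0.le hx1.le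
    · simp only [hbdef, neg_nonneg]
      exact Real.log_nonpos h1x.le (by linarith)
    · simp only [hadef, neg_nonneg]
      exact Real.log_nonpos hfx0.le hfx1
    · simp only [hadef, hbdef]
      rw [hf, Real.log_mul (by positivity) (ne_of_gt h1x),
        Real.log_mul (by norm_num) (ne_of_gt hx0)]
      ring
  obtain ⟨hbint, hbval⟩ := key_integral μ f₄ hfm hinv a b ha hb hae
  -- transfer to b ∘ f₄
  have hbf_int : Integrable (fun x => b (f₄ x)) μ := by
    have := (integrable_map_measure hb.aestronglyMeasurable hfm.aemeasurable).mp
      (by rwa [hinv])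
    exact this
  have hbf_val : ∫ x, b (f₄ x) ∂μ = Real.log 4 := by
    rw [← integral_map hfm.aemeasurable hb.aestronglyMeasurable, hinv, hbval]
  -- c
  set c : ℝ → ℝ := fun x => -Real.log |1 - 2 * x| with hcdef
  have hbc : ∀ x, b (f₄ x) = 2 * c x := by
    intro x
    have e1 : 1 - f₄ x = (1 - 2 * x) ^ 2 := by rw [hf]; ring
    simp only [hbdef, hcdef, e1]
    rw [← sq_abs, Real.log_pow]
    push_cast; ring
  have hceq : c = fun x => (1 / 2 : ℝ) * b (f₄ x) := by
    funext x; rw [hbc x]; ring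
  have hc_int : Integrable c μ := by rw [hceq]; exact hbf_int.const_mul _
  have hc_val : ∫ x, c x ∂μ = Real.log 2 := by
    rw [hceq, integral_const_mul, hbf_val, hlog4]; ring
  -- final
  have haeq : (fun x => Real.log |4 - 8 * x|) =ᵐ[μ] fun x => Real.log 4 - c x := by
    filter_upwards [hS] with x ⟨_, _, hxh⟩
    have h2x : (1 - 2 * x) ≠ 0 := by
      intro h; apply hxh; linarith
    have e1 : |4 - 8 * x| = 4 * |1 - 2 * x| := by
      rw [show (4:ℝ) - 8 * x = 4 * (1 - 2 * x) by ring, abs_mul]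
      norm_num
    rw [e1, Real.log_mul (by norm_num) (abs_ne_zero.mpr h2x)]
    simp only [hcdef]; ring
  constructor
  · exact ((integrable_const (Real.log 4)).sub hc_int).congr haeq.symm
  · rw [integral_congr_ae haeq, integral_sub (integrable_const _) hc_int,
      integral_const, hc_val]
    simp [hlog4]
    ring
end

section
/- Let a ∈ (3,4) and let f_a(x) = a·x·(1 − x). Let μ be an ergodic f_a-invariant Borel probability measure on [0,1] with μ ≠ δ₀, and suppose that log|f_a'| is μ-integrable. Then the Lyapunov exponent satisfies χ_μ = ∫ log|f_a'| dμ < log a. (Thus the Lyapunov exponents of all invariant measures other than the Dirac mass at 0 are bounded away from log a = χ_{δ₀}, which produces the phase transition of Proposition 1 in the negative spectrum.) -/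
open MeasureTheory Set

theorem lyapunov_exponent_lt_log_a
    (a : ℝ) (ha : a ∈ Ioo (3 : ℝ) 4)
    (f : ℝ → ℝ) (hf : ∀ x, f x = a * x * (1 - x))
    (μ : Measure ℝ) [IsProbabilityMeasure μ]
    (hconc : μ (Icc 0 1) = 1)
    (hinv : Measure.map f μ = μ)
    (herg : ∀ E : Set ℝ, MeasurableSet E → f ⁻¹' E = E → μ E = 0 ∨ μ E = 1)
    (hne : μ ≠ Measure.dirac 0)
    (hint : Integrable (fun x => Real.log (a * |1 - 2 * x|)) μ) :
    ∫ x, Real.log (a * |1 - 2 * x|) ∂μ < Real.log a := by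
  obtain ⟨ha3, ha4⟩ := ha
  have ha0 : (0:ℝ) < a := by linarith
  have hla : 0 < Real.log a := Real.log_pos (by linarith)
  -- a.e. x ∈ Icc 0 1
  have hae : ∀ᵐ x ∂μ, x ∈ Icc (0:ℝ) 1 := by
    have hc : μ (Icc (0:ℝ) 1)ᶜ = 0 := by
      rw [measure_compl measurableSet_Icc (measure_ne_top μ _), hconc,
        measure_univ]
      simp
    exact mem_ae_iff.mpr hc
  -- pointwise bound
  have hbound : ∀ x ∈ Icc (0:ℝ) 1, Real.log (a * |1 - 2 * x|) ≤ Real.log a := by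
    intro x hx
    rcases eq_or_lt_of_le (abs_nonneg (1 - 2 * x)) with h0 | h0
    · rw [← h0, mul_zero, Real.log_zero]
      exact hla.le
    · have h1 : |1 - 2 * x| ≤ 1 := by
        rw [abs_le]; constructor <;> [linarith [hx.2]; linarith [hx.1]]
      exact Real.log_le_log (by positivity) (by nlinarith)
  have haeb : ∀ᵐ x ∂μ, Real.log (a * |1 - 2 * x|) ≤ Real.log a :=
    hae.mono fun x hx => hbound x hx
  have hle : ∫ x, Real.log (a * |1 - 2 * x|) ∂μ ≤ Real.log a := by
    calc ∫ x, Real.log (a * |1 - 2 * x|) ∂μ ≤ ∫ _, Real.log a ∂μ :=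
          integral_mono_ae hint (integrable_const _) haeb
      _ = Real.log a := by simp
  rcases lt_or_eq_of_le hle with h | heq
  · exact h
  exfalso
  -- the nonneg function log a - h has zero integral, hence is a.e. zero
  have hg : Integrable (fun x => Real.log a - Real.log (a * |1 - 2 * x|)) μ :=
    (integrable_const _).sub hint
  have hgz : ∫ x, (Real.log a - Real.log (a * |1 - 2 * x|)) ∂μ = 0 := by
    rw [integral_sub (integrable_const _) hint, heq]
    simp
  have hgnn : 0 ≤ᵐ[μ] fun x => Real.log a - Real.log (a * |1 - 2 * x|) :=
    haeb.mono fun x hx => by simpa using hx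
  have haez : (fun x => Real.log a - Real.log (a * |1 - 2 * x|)) =ᵐ[μ] 0 :=
    (integral_eq_zero_iff_of_nonneg_ae hgnn hg).mp hgz
  -- so a.e. x ∈ {0, 1}
  have hmem : ∀ᵐ x ∂μ, x ∈ ({0, 1} : Set ℝ) := by
    filter_upwards [hae, haez] with x hx hz
    have hz' : Real.log (a * |1 - 2 * x|) = Real.log a := by
      have h := hz
      simp only [Pi.zero_apply] at h
      linarith
    have hx01 : x = 0 ∨ x = 1 := by
      rcases eq_or_lt_of_le (abs_nonneg (1 - 2 * x)) with h0 | h0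
      · rw [← h0, mul_zero, Real.log_zero] at hz'
        exact absurd hz'.symm hla.ne'
      · have hl0 : Real.log |1 - 2 * x| = 0 := by
          rw [Real.log_mul ha0.ne' h0.ne'] at hz'; linarith
        rcases Real.log_eq_zero.mp hl0 with h | h | h
        · exact absurd h h0.ne'
        · rcases (abs_eq (by norm_num : (0:ℝ) ≤ 1)).mp h with h | h
          · left; linarith
          · right; linarith
        · exfalso; linarith [abs_nonneg (1 - 2 * x)]
    simpa [Set.mem_insert_iff, Set.mem_singleton_iff] using hx01
  have hm01 : MeasurableSet ({0, 1} : Set ℝ) :=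
    (measurableSet_singleton (1:ℝ)).insert 0
  have h01 : μ ({0, 1} : Set ℝ) = 1 := by
    have hc : μ ({0, 1} : Set ℝ)ᶜ = 0 := mem_ae_iff.mp hmem
    exact (prob_compl_eq_zero_iff hm01).mp hc
  -- invariance: μ {0} = μ (f ⁻¹' {0}) ≥ μ {0,1} = 1
  have hfm : Measurable f := by
    have hfe : f = fun x => a * x * (1 - x) := funext hf
    rw [hfe]
    exact ((continuous_const.mul continuous_id).mul
      (continuous_const.sub continuous_id)).measurable
  have hpre : ({0, 1} : Set ℝ) ⊆ f ⁻¹' {0} := by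
    intro x hx
    have hx' : x = 0 ∨ x = 1 := by simpa using hx
    rcases hx' with rfl | rfl <;> norm_num [Set.mem_preimage, hf]
  have h0 : μ ({0} : Set ℝ) = 1 := by
    have h1 : μ (f ⁻¹' {0}) = μ ({0} : Set ℝ) := by
      rw [← Measure.map_apply hfm (measurableSet_singleton 0), hinv]
    have h2 : (1:ENNReal) ≤ μ (f ⁻¹' {0}) := h01 ▸ measure_mono hpre
    exact le_antisymm prob_le_one (h1 ▸ h2)
  -- hence μ = dirac 0
  apply hne
  have hc0 : μ ({0} : Set ℝ)ᶜ = 0 := by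
    rw [measure_compl (measurableSet_singleton 0) (measure_ne_top μ _),
      measure_univ, h0]
    simp
  ext s hs
  rw [Measure.dirac_apply' 0 hs]
  by_cases h0s : (0:ℝ) ∈ s
  · have hub : μ s ≤ 1 := prob_le_one
    have hlb : μ ({0} : Set ℝ) ≤ μ s :=
      measure_mono (Set.singleton_subset_iff.mpr h0s)
    rw [h0] at hlb
    simp [Set.indicator_of_mem h0s, le_antisymm hub hlb]
  · have hsub : s ⊆ ({0} : Set ℝ)ᶜ := by
      intro x hx
      simp only [Set.mem_compl_iff, Set.mem_singleton_iff]
      rintro rfl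
      exact h0s hx
    simp [Set.indicator_of_notMem h0s, measure_mono_null hsub hc0]
end

section
/- Let f : [0,1] → [0,1] be a continuous map for which there exists c ∈ [0,1] such that f is monotone on [0,c] and monotone on [c,1] (f has at most two branches of monotonicity). Then the topological entropy of f is at most log 2. -/
open Set Dynamics Filter ENNReal

private lemma sep_card_le (f : (Icc (0:ℝ) 1) → (Icc (0:ℝ) 1)) (n : ℕ) {J : Set (Icc (0:ℝ) 1)}
    (hJ : ∀ k < n, MonotoneOn (f^[k]) J ∨ AntitoneOn (f^[k]) J)
    {ε : ℝ} (hε : 0 < ε) (t : Finset (Icc (0:ℝ) 1)) (ht : ↑t ⊆ J)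
    (hsep : ∀ x ∈ t, ∀ y ∈ t, x ≠ y → ∃ k < n, ε ≤ dist (f^[k] x) (f^[k] y)) :
    t.card ≤ n * ⌈ε⁻¹⌉₊ + 1 := by
  set m := t.card with hm
  rcases Nat.lt_or_ge m 2 with hm2 | hm2
  · omega
  have hm1 : m - 1 < m := by omega
  let e := t.orderIsoOfFin hm.symm
  let u : ℕ → (Icc (0:ℝ) 1) := fun i => (e ⟨min i (m-1), lt_of_le_of_lt (min_le_right _ _) hm1⟩ : Icc (0:ℝ) 1)
  have hu_mem : ∀ i, u i ∈ t := fun i => (e _).2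
  have hu_mono : Monotone u := by
    intro i j hij
    exact Subtype.coe_le_coe.2 (e.monotone (by simp [Fin.mk_le_mk]; omega))
  have hu_ne : ∀ i, i < m - 1 → u i ≠ u (i+1) := by
    intro i hi h
    have := e.injective (Subtype.ext h)
    rw [Fin.mk_eq_mk] at this
    omega
  have key : ∀ i, ∃ k, i < m - 1 →
      k < n ∧ ε ≤ dist (f^[k] (u i)) (f^[k] (u (i+1))) := by
    intro i
    by_cases h : i < m - 1
    · obtain ⟨k, hk, hd⟩ := hsep _ (hu_mem i) _ (hu_mem (i+1)) (hu_ne i h)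
      exact ⟨k, fun _ => ⟨hk, hd⟩⟩
    · exact ⟨0, fun h' => absurd h' h⟩
  choose K hK using key
  have hcount : m - 1 = ∑ k ∈ Finset.range n,
      ((Finset.range (m-1)).filter (fun i => K i = k)).card := by
    rw [← Finset.card_eq_sum_card_fiberwise, Finset.card_range]
    intro i hi
    exact Finset.mem_range.2 (hK i (Finset.mem_range.1 hi)).1
  have hfiber : ∀ k ∈ Finset.range n,
      ((Finset.range (m-1)).filter (fun i => K i = k)).card ≤ ⌈ε⁻¹⌉₊ := by
    intro k hk
    set S := (Finset.range (m-1)).filter (fun i => K i = k) with hS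
    set v : ℕ → ℝ := fun i => ((f^[k] (u i) : Icc (0:ℝ) 1) : ℝ) with hv
    have hv01 : ∀ i, v i ∈ Icc (0:ℝ) 1 := fun i => (f^[k] (u i)).2
    have sumdist : ∑ i ∈ Finset.range (m-1), dist (v (i+1)) (v i) ≤ 1 := by
      rcases hJ k (Finset.mem_range.1 hk) with hmo | hmo
      · have mono : ∀ i j, i ≤ j → v i ≤ v j := fun i j hij =>
          Subtype.coe_le_coe.2 (hmo (ht (hu_mem i)) (ht (hu_mem j)) (hu_mono hij))
        have : ∀ i, dist (v (i+1)) (v i) = v (i+1) - v i := fun i => by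
          rw [Real.dist_eq, abs_of_nonneg (by linarith [mono i (i+1) (Nat.le_succ i)])]
        simp_rw [this, Finset.sum_range_sub v (m-1)]
        linarith [(hv01 (m-1)).2, (hv01 0).1]
      · have anti : ∀ i j, i ≤ j → v j ≤ v i := fun i j hij =>
          Subtype.coe_le_coe.2 (hmo (ht (hu_mem i)) (ht (hu_mem j)) (hu_mono hij))
        have : ∀ i, dist (v (i+1)) (v i) = v i - v (i+1) := fun i => by
          rw [Real.dist_eq, abs_of_nonpos (by linarith [anti i (i+1) (Nat.le_succ i)])]
          ring
        simp_rw [this, Finset.sum_range_sub' v (m-1)]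
        linarith [(hv01 (m-1)).1, (hv01 0).2]
    have hcards : (S.card : ℝ) * ε ≤ 1 := by
      calc (S.card : ℝ) * ε = ∑ _i ∈ S, ε := by rw [Finset.sum_const, nsmul_eq_mul]
        _ ≤ ∑ i ∈ S, dist (v (i+1)) (v i) := by
            apply Finset.sum_le_sum
            intro i hi
            rw [hS, Finset.mem_filter, Finset.mem_range] at hi
            have := (hK i hi.1).2
            rw [hi.2] at this
            rwa [Subtype.dist_eq, dist_comm] at this
        _ ≤ ∑ i ∈ Finset.range (m-1), dist (v (i+1)) (v i) := by
            apply Finset.sum_le_sum_of_subset_of_nonneg (Finset.filter_subset _ _)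
            intro i _ _; exact dist_nonneg
        _ ≤ 1 := sumdist
    have h1 : (S.card : ℝ) ≤ ε⁻¹ := by
      rw [inv_eq_one_div, le_div_iff₀ hε]; exact hcards
    exact_mod_cast h1.trans (Nat.le_ceil _)
  have : m - 1 ≤ n * ⌈ε⁻¹⌉₊ := by
    rw [hcount]
    calc ∑ k ∈ Finset.range n, ((Finset.range (m-1)).filter (fun i => K i = k)).card
        ≤ ∑ _k ∈ Finset.range n, ⌈ε⁻¹⌉₊ := Finset.sum_le_sum hfiber
      _ = n * ⌈ε⁻¹⌉₊ := by rw [Finset.sum_const, Finset.card_range, smul_eq_mul]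
  omega

private lemma ma_comp {α β γ : Type*} [Preorder α] [Preorder β] [Preorder γ]
    {g : β → γ} {h : α → β} {s : Set α} {t : Set β}
    (hg : MonotoneOn g t ∨ AntitoneOn g t) (hh : MonotoneOn h s ∨ AntitoneOn h s)
    (hm : MapsTo h s t) : MonotoneOn (g ∘ h) s ∨ AntitoneOn (g ∘ h) s := by
  rcases hg with hg | hg <;> rcases hh with hh | hh
  · exact Or.inl fun a ha b hb hab => hg (hm ha) (hm hb) (hh ha hb hab)
  · exact Or.inr fun a ha b hb hab => hg (hm hb) (hm ha) (hh ha hb hab)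
  · exact Or.inr fun a ha b hb hab => hg (hm ha) (hm hb) (hh ha hb hab)
  · exact Or.inl fun a ha b hb hab => hg (hm hb) (hm ha) (hh ha hb hab)

private def itin (f : (Icc (0:ℝ) 1) → (Icc (0:ℝ) 1)) (c : Icc (0:ℝ) 1)
    (w : ℕ → Bool) (n : ℕ) : Set (Icc (0:ℝ) 1) :=
  {x | ∀ j < n, if w j then f^[j] x ≤ c else c ≤ f^[j] x}

private lemma itin_ma (f : (Icc (0:ℝ) 1) → (Icc (0:ℝ) 1)) (c : Icc (0:ℝ) 1)
    (h₁ : MonotoneOn f {x | x ≤ c} ∨ AntitoneOn f {x | x ≤ c})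
    (h₂ : MonotoneOn f {x | c ≤ x} ∨ AntitoneOn f {x | c ≤ x})
    (w : ℕ → Bool) (n : ℕ) :
    ∀ k ≤ n, MonotoneOn (f^[k]) (itin f c w n) ∨ AntitoneOn (f^[k]) (itin f c w n) := by
  intro k
  induction k with
  | zero =>
    intro _
    left
    simp only [Function.iterate_zero]
    exact fun a _ b _ h => h
  | succ k ih =>
    intro hk
    rw [Function.iterate_succ']
    refine ma_comp (t := if w k then {x | x ≤ c} else {x | c ≤ x}) ?_ (ih (by omega)) ?_
    · cases hw : w k
      · simpa [hw] using h₂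
      · simpa [hw] using h₁
    · intro x hx
      have := hx k (by omega)
      cases hw : w k <;> simp only [hw] at this ⊢ <;> simpa using this

private lemma netMaxcard_le_bound (f : (Icc (0:ℝ) 1) → (Icc (0:ℝ) 1)) (c : Icc (0:ℝ) 1)
    (h₁ : MonotoneOn f {x | x ≤ c} ∨ AntitoneOn f {x | x ≤ c})
    (h₂ : MonotoneOn f {x | c ≤ x} ∨ AntitoneOn f {x | c ≤ x})
    {ε : ℝ} (hε : 0 < ε) (n : ℕ) :
    netMaxcard f univ {p : (Icc (0:ℝ) 1) × (Icc (0:ℝ) 1) | dist p.1 p.2 < ε} n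
      ≤ ((2^n * (n * ⌈ε⁻¹⌉₊ + 1) : ℕ) : ℕ∞) := by
  classical
  apply iSup₂_le
  intro s hs
  rw [Nat.cast_le]
  set U : Set ((Icc (0:ℝ) 1) × (Icc (0:ℝ) 1)) := {p | dist p.1 p.2 < ε} with hU
  let code : (Icc (0:ℝ) 1) → (Fin n → Bool) := fun x k => decide (f^[(k:ℕ)] x ≤ c)
  rw [Finset.card_eq_sum_card_fiberwise (f := code) (t := Finset.univ) (fun x _ => Finset.mem_univ _)]
  have bound : ∀ w : Fin n → Bool,
      (s.filter (fun x => code x = w)).card ≤ n * ⌈ε⁻¹⌉₊ + 1 := by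
    intro w
    set w' : ℕ → Bool := fun j => if h : j < n then w ⟨j, h⟩ else true with hw'
    apply sep_card_le f n (J := itin f c w' n)
      (fun k hk => itin_ma f c h₁ h₂ w' n k hk.le) hε
    · intro x hx
      simp only [Finset.coe_filter, mem_setOf_eq] at hx
      intro j hj
      have hcode : w' j = decide (f^[j] x ≤ c) := by
        rw [hw']; simp only [hj, dif_pos]
        rw [← hx.2]
      rw [hcode]
      by_cases hle : f^[j] x ≤ c
      · simp [hle]
      · simp [hle]
        exact (le_of_not_ge hle)
    · intro x hx y hy hxy
      by_contra hcon
      push_neg at hcon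
      have hx' := Finset.mem_of_mem_filter x hx
      have hy' := Finset.mem_of_mem_filter y hy
      have hyx : y ∈ UniformSpace.ball x (dynEntourage f U n) := by
        rw [mem_ball_dynEntourage]
        intro k hk
        simpa [UniformSpace.ball, hU] using hcon k hk
      have hyy : y ∈ UniformSpace.ball y (dynEntourage f U n) := by
        rw [mem_ball_dynEntourage]
        intro k hk
        simpa [UniformSpace.ball, hU] using hε
      exact hxy (hs.2.elim_set hx' hy' y hyx hyy)
  calc ∑ w ∈ (Finset.univ : Finset (Fin n → Bool)),
        (s.filter (fun x => code x = w)).card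
      ≤ ∑ _w ∈ (Finset.univ : Finset (Fin n → Bool)), (n * ⌈ε⁻¹⌉₊ + 1) :=
        Finset.sum_le_sum (fun w _ => bound w)
    _ = 2^n * (n * ⌈ε⁻¹⌉₊ + 1) := by
        rw [Finset.sum_const, Finset.card_univ, smul_eq_mul]
        congr 1
        simp

private lemma log_aux_tendsto (M : ℕ) :
    Tendsto (fun n : ℕ => Real.log (n * M + 1) / n) atTop (nhds 0) := by
  have hup : Tendsto (fun n : ℕ => Real.log (M + 1) / n + Real.log n / n) atTop (nhds 0) := by
    have h1 := tendsto_const_div_atTop_nhds_zero_nat (Real.log (M + 1))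
    have h2 : Tendsto (fun n : ℕ => Real.log n / n) atTop (nhds 0) :=
      (Real.isLittleO_log_id_atTop.tendsto_div_nhds_zero).comp tendsto_natCast_atTop_atTop
    simpa using h1.add h2
  apply tendsto_of_tendsto_of_tendsto_of_le_of_le' tendsto_const_nhds hup
  · filter_upwards [eventually_ge_atTop 1] with n hn
    apply div_nonneg _ (Nat.cast_nonneg n)
    apply Real.log_nonneg
    have : (0:ℝ) ≤ (n:ℝ) * M := by positivity
    linarith
  · filter_upwards [eventually_ge_atTop 1] with n hn
    rw [← add_div]
    have hn' : (0:ℝ) < (n:ℝ) := by exact_mod_cast hn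
    gcongr
    rw [← Real.log_mul (by positivity) hn'.ne']
    apply Real.log_le_log (by positivity)
    have h1 : (1:ℝ) ≤ (n:ℝ) := by exact_mod_cast hn
    nlinarith [Nat.cast_nonneg (α := ℝ) M]

private lemma toReal_enat_nat (N : ℕ) : (((N : ℕ∞)) : ENNReal).toReal = (N : ℝ) := by simp

theorem entropy_le_log_two_of_two_branches
    (f : (Icc (0 : ℝ) 1) → (Icc (0 : ℝ) 1)) (hf : Continuous f)
    (c : Icc (0 : ℝ) 1)
    (h₁ : MonotoneOn f {x | x ≤ c} ∨ AntitoneOn f {x | x ≤ c})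
    (h₂ : MonotoneOn f {x | c ≤ x} ∨ AntitoneOn f {x | c ≤ x}) :
    coverEntropy f univ ≤ (Real.log 2 : EReal) := by
  rw [coverEntropy_eq_iSup_basis_netEntropyEntourage Metric.uniformity_basis_dist]
  apply iSup₂_le
  intro ε hε
  set M := ⌈ε⁻¹⌉₊ with hM
  set b : ℕ → EReal := fun n => ((Real.log 2 + Real.log (n * M + 1) / n : ℝ) : EReal) with hb
  have hbtend : Tendsto b atTop (nhds ((Real.log 2 : ℝ) : EReal)) := by
    rw [hb]
    refine EReal.tendsto_coe.2 ?_
    simpa using tendsto_const_nhds.add (log_aux_tendsto M)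
  have hev : ∀ᶠ n in atTop, ENNReal.log (netMaxcard f univ {p | dist p.1 p.2 < ε} n) / (n : EReal) ≤ b n := by
    filter_upwards [eventually_ge_atTop 1] with n hn
    have hn' : (0:ℝ) < (n:ℝ) := by exact_mod_cast hn
    set N : ℕ := 2^n * (n * M + 1) with hNdef
    have h1 : ((netMaxcard f univ {p | dist p.1 p.2 < ε} n : ℕ∞) : ℝ≥0∞)
        ≤ ((N : ℕ∞) : ℝ≥0∞) :=
      ENat.toENNReal_le.2 (netMaxcard_le_bound f c h₁ h₂ hε n)
    have hNR : (0:ℝ) < (N:ℝ) := by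
      have : 0 < N := by positivity
      exact_mod_cast this
    calc ENNReal.log (netMaxcard f univ {p | dist p.1 p.2 < ε} n) / (n : EReal)
        ≤ ENNReal.log ((N : ℕ∞) : ℝ≥0∞) / (n : EReal) :=
          EReal.monotone_div_right_of_nonneg (by exact_mod_cast Nat.zero_le n)
            (ENNReal.log_monotone h1)
      _ = b n := by
          have hN := toReal_enat_nat N
          rw [ENNReal.log_pos_real' (by rw [hN]; exact hNR), hN]
          have hcast : ((n : ℝ) : EReal) = (n : EReal) := by norm_cast
          have hreal : Real.log N / (n:ℝ) = Real.log 2 + Real.log ((n:ℝ) * (M:ℝ) + 1) / (n:ℝ) := by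
            rw [hNdef]
            push_cast
            rw [Real.log_mul (by positivity) (by positivity), Real.log_pow, add_div,
              mul_div_cancel_left₀ (Real.log 2) hn'.ne']
          rw [← hcast, ← EReal.coe_div, hreal, hb]
  have hble : netEntropyEntourage f univ {p | dist p.1 p.2 < ε} ≤ atTop.limsup b :=
    limsup_le_limsup hev
  exact hble.trans_eq hbtend.limsup_eq
end

section
/- Let f : [0,1] → [0,1] be a continuous unimodal map with turning point c ∈ (0,1) (f is strictly monotone on [0,c] and on [c,1], with a single change of monotonicity at c). Let J be a restrictive interval of period k > 1: a closed nondegenerate interval with c ∈ J, J strictly contained in [0,1], such that for all 0 ≤ i < j < k the images f^i(J) and f^j(J) overlap in at most one point, f^k(J) ⊆ J, and f^k(∂J) ⊆ ∂J. Then the set Y = f^0(J) ∪ f^1(J) ∪ … ∪ f^{k−1}(J) is a compact forward-invariant set (f(Y) ⊆ Y), and the topological entropy of the restriction of f to Y is at most (1/k)·log 2. -/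
open Set Dynamics

section Aux
section
open Filter Real
lemma log_linear_div_tendsto (a b : ℝ) (ha : 0 < a) :
    Tendsto (fun n : ℕ => Real.log (a * n + b) / n) atTop (nhds 0) := by
  have h1 : Tendsto (fun n : ℕ => a * n + b) atTop atTop := by
    apply Tendsto.atTop_add _ tendsto_const_nhds
    exact (tendsto_natCast_atTop_atTop).const_mul_atTop ha
  have h2 := (Real.isLittleO_log_id_atTop).comp_tendsto h1
  have h3 : (fun n : ℕ => a * n + b) =O[atTop] (fun n : ℕ => (n : ℝ)) := by
    rw [Asymptotics.isBigO_iff]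
    refine ⟨a + |b|, ?_⟩
    filter_upwards [eventually_ge_atTop 1] with n hn
    have hn1 : (1 : ℝ) ≤ n := by exact_mod_cast hn
    have : |a * n + b| ≤ a * n + |b| * n := by
      calc |a * n + b| ≤ |a * n| + |b| := abs_add_le _ _
        _ = a * n + |b| := by rw [abs_of_nonneg (by positivity)]
        _ ≤ a * n + |b| * n := by nlinarith [abs_nonneg b]
    simpa [abs_of_nonneg (show (0:ℝ) ≤ (n:ℝ) by positivity), add_mul] using this
  have h4 := h2.trans_isBigO h3
  rw [Asymptotics.isLittleO_iff_tendsto'] at h4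
  · exact h4
  · filter_upwards [eventually_ge_atTop 1] with n hn h0
    exact absurd h0 (by positivity)

lemma nat_le_div_succ_mul (n k : ℕ) (hk : 0 < k) : n ≤ (n / k + 1) * k := by
  have h := Nat.div_add_mod n k
  have h2 := Nat.mod_lt n hk
  have h3 : (n / k + 1) * k = k * (n / k) + k := by ring
  omega

lemma tendsto_logB (k m : ℕ) (hk : 1 < k) (hm : 0 < m) :
    Tendsto (fun n : ℕ =>
      Real.log ((k : ℝ) * 2 ^ (n / k + 1) * (2 * n * m + 1)) / n)
      atTop (nhds (Real.log 2 / k)) := by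
  have hk0 : (0 : ℝ) < k := by positivity
  have hlog2 : (0:ℝ) ≤ Real.log 2 := Real.log_nonneg one_le_two
  have hlogk : (0:ℝ) ≤ Real.log k := Real.log_nonneg (by exact_mod_cast hk.le)
  have hlogsplit : ∀ n : ℕ, Real.log ((k : ℝ) * 2 ^ (n / k + 1) * (2 * n * m + 1))
      = Real.log k + ((n / k : ℕ) + 1) * Real.log 2 + Real.log (2 * n * m + 1) := by
    intro n
    rw [Real.log_mul (by positivity) (by positivity), Real.log_mul (by positivity) (by positivity),
      Real.log_pow]
    push_cast
    ring
  have hlow : ∀ᶠ n : ℕ in atTop, Real.log 2 / k ≤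
      Real.log ((k : ℝ) * 2 ^ (n / k + 1) * (2 * n * m + 1)) / n := by
    filter_upwards [eventually_ge_atTop 1] with n hn
    have hn0 : (0 : ℝ) < n := by exact_mod_cast hn
    rw [hlogsplit n, div_le_div_iff₀ hk0 hn0]
    have h1' : (n : ℝ) ≤ ((n / k : ℕ) + 1) * k := by
      exact_mod_cast nat_le_div_succ_mul n k (by omega)
    have hlogn : (0:ℝ) ≤ Real.log (2 * n * m + 1) := Real.log_nonneg (by
      have : (0:ℝ) ≤ 2 * n * m := by positivity
      linarith)
    nlinarith [mul_le_mul_of_nonneg_left h1' hlog2, mul_nonneg hlogk hk0.le,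
      mul_nonneg hlogn hk0.le, mul_nonneg hlog2 hk0.le]
  have hup : ∀ᶠ n : ℕ in atTop, Real.log ((k : ℝ) * 2 ^ (n / k + 1) * (2 * n * m + 1)) / n ≤
      Real.log 2 / k + (Real.log k + Real.log 2 + Real.log (2 * n * m + 1)) / n := by
    filter_upwards [eventually_ge_atTop 1] with n hn
    have hn0 : (0 : ℝ) < n := by exact_mod_cast hn
    rw [hlogsplit n]
    have h1 : ((n / k : ℕ) : ℝ) ≤ (n : ℝ) / k := Nat.cast_div_le
    have key : Real.log k + ((n / k : ℕ) + 1) * Real.log 2 + Real.log (2 * n * m + 1)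
        ≤ (n:ℝ)/k * Real.log 2 + (Real.log k + Real.log 2 + Real.log (2 * n * m + 1)) := by
      nlinarith
    calc (Real.log k + ((n / k : ℕ) + 1) * Real.log 2 + Real.log (2 * n * m + 1)) / n
        ≤ ((n:ℝ)/k * Real.log 2 + (Real.log k + Real.log 2 + Real.log (2 * n * m + 1))) / n := by
          gcongr
      _ = Real.log 2 / k + (Real.log k + Real.log 2 + Real.log (2 * n * m + 1)) / n := by
          field_simp
  have h0 : Tendsto (fun n : ℕ => (Real.log k + Real.log 2 + Real.log (2 * n * m + 1)) / n)
      atTop (nhds 0) := by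
    have h1 : Tendsto (fun n : ℕ => (Real.log k + Real.log 2) / n) atTop (nhds 0) :=
      tendsto_const_div_atTop_nhds_zero_nat _
    have h2 : Tendsto (fun n : ℕ => Real.log ((2*m:ℝ) * n + 1) / n) atTop (nhds 0) :=
      log_linear_div_tendsto (2*m) 1 (by positivity)
    have h3 := h1.add h2
    rw [add_zero] at h3
    apply h3.congr
    intro n
    rw [← add_div]
    congr 2
    push_cast
    ring
  have hupt := (tendsto_const_nhds : Tendsto (fun _ : ℕ => Real.log 2 / (k:ℝ)) atTop
      (nhds (Real.log 2 / k))).add h0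
  rw [add_zero] at hupt
  exact tendsto_of_tendsto_of_tendsto_of_le_of_le' tendsto_const_nhds hupt hlow hup

end
lemma phi_counting {β : Type*} [LinearOrder β] (L : Set β) (n m : ℕ) (g : ℕ → β → ℕ)
    (hmono : ∀ j < n, MonotoneOn (g j) L ∨ AntitoneOn (g j) L)
    (hbd : ∀ j < n, ∀ x ∈ L, g j x ≤ m) :
    ∃ φ : β → ℤ, (∀ x ∈ L, φ x ∈ Finset.Icc (-(n * m : ℤ)) (n * m)) ∧
      (∀ x ∈ L, ∀ y ∈ L, φ x = φ y → ∀ j < n, g j x = g j y) := by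
  classical
  set sgn : ℕ → ℤ := fun j => if MonotoneOn (g j) L then 1 else -1 with hsgn
  refine ⟨fun x => ∑ j ∈ Finset.range n, sgn j * (g j x : ℤ), ?_, ?_⟩
  · intro x hx
    rw [Finset.mem_Icc, ← abs_le]
    calc |∑ j ∈ Finset.range n, sgn j * (g j x : ℤ)|
        ≤ ∑ j ∈ Finset.range n, |sgn j * (g j x : ℤ)| := Finset.abs_sum_le_sum_abs _ _
      _ ≤ ∑ _j ∈ Finset.range n, (m : ℤ) := by
          refine Finset.sum_le_sum fun j hj => ?_
          rw [abs_mul]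
          have h1 : |sgn j| = 1 := by
            simp only [hsgn]; split_ifs <;> simp
          rw [h1, one_mul, abs_of_nonneg (by positivity)]
          exact_mod_cast hbd j (Finset.mem_range.1 hj) x hx
      _ = (n * m : ℤ) := by simp [mul_comm]
  · have key : ∀ x ∈ L, ∀ y ∈ L, x ≤ y →
        (∑ j ∈ Finset.range n, sgn j * (g j x : ℤ)) =
        (∑ j ∈ Finset.range n, sgn j * (g j y : ℤ)) → ∀ j < n, g j x = g j y := by
      intro x hx y hy hxy hsum j hj
      have hle : ∀ i ∈ Finset.range n, sgn i * (g i x : ℤ) ≤ sgn i * (g i y : ℤ) := by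
        intro i hi
        have hi' := Finset.mem_range.1 hi
        by_cases h : MonotoneOn (g i) L
        · simp only [hsgn, if_pos h, one_mul]
          exact_mod_cast h hx hy hxy
        · have ha : AntitoneOn (g i) L := (hmono i hi').resolve_left h
          simp only [hsgn, if_neg h, neg_one_mul, neg_le_neg_iff]
          exact_mod_cast ha hx hy hxy
      have := (Finset.sum_eq_sum_iff_of_le hle).1 hsum j (Finset.mem_range.2 hj)
      have hne : sgn j ≠ 0 := by simp only [hsgn]; split_ifs <;> simp
      have := mul_left_cancel₀ hne this
      exact_mod_cast this
    intro x hx y hy hphi j hj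
    rcases le_total x y with h | h
    · exact key x hx y hy h hphi j hj
    · exact (key y hy x hx h hphi.symm j hj).symm

lemma image_icc_ordConnected (g : (Icc (0:ℝ) 1) → (Icc (0:ℝ) 1)) (hg : Continuous g)
    (p q : Icc (0:ℝ) 1) :
    OrdConnected ((fun x => (g x : ℝ)) '' (Icc p q)) := by
  have hval : Subtype.val '' (Icc p q : Set (Icc (0:ℝ) 1)) = Icc p.1 q.1 := by
    ext x
    constructor
    · rintro ⟨y, ⟨h1, h2⟩, rfl⟩
      exact ⟨h1, h2⟩
    · rintro ⟨h1, h2⟩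
      have hx : x ∈ Icc (0:ℝ) 1 := ⟨p.2.1.trans h1, h2.trans q.2.2⟩
      exact ⟨⟨x, hx⟩, ⟨h1, h2⟩, rfl⟩
  have h1 : IsPreconnected (Icc p q : Set (Icc (0:ℝ) 1)) := by
    rw [← Topology.IsInducing.subtypeVal.isPreconnected_image, hval]
    exact isPreconnected_Icc
  have h2 : IsPreconnected ((fun x => (g x : ℝ)) '' (Icc p q)) :=
    h1.image _ ((continuous_subtype_val.comp hg).continuousOn)
  exact h2.ordConnected
end Aux

theorem entropy_on_renormalisation_cycle_le
    (f : (Icc (0 : ℝ) 1) → (Icc (0 : ℝ) 1)) (hf : Continuous f)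
    (c : Icc (0 : ℝ) 1) (hc0 : (0 : ℝ) < c.1) (hc1 : c.1 < 1)
    (huni : (StrictMonoOn f {x | x ≤ c} ∧ StrictAntiOn f {x | c ≤ x}) ∨
            (StrictAntiOn f {x | x ≤ c} ∧ StrictMonoOn f {x | c ≤ x}))
    (k : ℕ) (hk : 1 < k)
    (p q : Icc (0 : ℝ) 1) (hpq : p < q)
    (J : Set (Icc (0 : ℝ) 1)) (hJ : J = Icc p q)
    (hcJ : c ∈ J) (hJne : J ≠ univ)
    (hoverlap : ∀ i j : ℕ, i < j → j < k → (f^[i] '' J ∩ f^[j] '' J).Subsingleton)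
    (hret : f^[k] '' J ⊆ J)
    (hbd : f^[k] '' ({p, q} : Set (Icc (0 : ℝ) 1)) ⊆ ({p, q} : Set (Icc (0 : ℝ) 1)))
    (Y : Set (Icc (0 : ℝ) 1)) (hY : Y = ⋃ i ∈ Finset.range k, f^[i] '' J) :
    IsCompact Y ∧ MapsTo f Y Y ∧
      coverEntropy f Y ≤ ((Real.log 2 / k : ℝ) : EReal) := by
  classical
  haveI : CompactSpace (Icc (0 : ℝ) 1) := isCompact_iff_compactSpace.mp isCompact_Icc
  have hk0 : 0 < k := by omega
  have hfi : ∀ i : ℕ, Continuous (f^[i]) := fun i => hf.iterate i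
  have hJclosed : IsClosed J := by
    rw [hJ]
    have h : (Icc p q : Set (Icc (0 : ℝ) 1)) = Subtype.val ⁻¹' (Icc p.1 q.1) := by
      ext x; simp [Subtype.coe_le_coe]
    rw [h]
    exact isClosed_Icc.preimage continuous_subtype_val
  have hJcomp : IsCompact J := hJclosed.isCompact
  have hYcomp : IsCompact Y := by
    rw [hY]
    apply (Finset.range k).finite_toSet.isCompact_biUnion
    intro i _
    exact (hJcomp.image (hfi i))
  have hmod : ∀ a : ℕ, f^[a] '' J ⊆ f^[a % k] '' J := by
    intro a
    induction a using Nat.strong_induction_on with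
    | _ a ih =>
      rcases lt_or_ge a k with h | h
      · rw [Nat.mod_eq_of_lt h]
      · have heq : f^[a] '' J = f^[a - k] '' (f^[k] '' J) := by
          rw [← image_comp, ← Function.iterate_add, Nat.sub_add_cancel h]
        have h1 : f^[a] '' J ⊆ f^[a - k] '' J := by
          rw [heq]; exact image_mono hret
        have h2 := ih (a - k) (by omega)
        have h3 : (a - k) % k = a % k := by
          conv_rhs => rw [show a = (a - k) + k by omega]
          rw [Nat.add_mod_right]
        exact h1.trans (h3 ▸ h2)
  have hYsub : ∀ i : ℕ, i < k → f^[i] '' J ⊆ Y := by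
    intro i hi
    rw [hY]
    exact subset_biUnion_of_mem (u := fun i => f^[i] '' J) (Finset.mem_range.2 hi)
  have hmapsTo : MapsTo f Y Y := by
    intro x hx
    rw [hY] at hx
    simp only [Finset.mem_range, mem_iUnion, exists_prop] at hx
    obtain ⟨i, hi, z, hz, rfl⟩ := hx
    have h0 : f (f^[i] z) = f^[i+1] z := (Function.iterate_succ_apply' f i z).symm
    rw [h0]
    have h1 : f^[i+1] z ∈ f^[i+1] '' J := mem_image_of_mem _ hz
    exact hYsub _ (Nat.mod_lt _ hk0) (hmod (i+1) h1)
  refine ⟨hYcomp, hmapsTo, ?_⟩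
  -- sides
  set side : Bool → Set (Icc (0 : ℝ) 1) := fun b => if b then {x | x ≤ c} else {x | c ≤ x}
    with hside
  have hside_mem : ∀ x : Icc (0 : ℝ) 1, ∃ b, x ∈ side b := by
    intro x
    rcases le_total x c with h | h
    · exact ⟨true, by simp [hside, h]⟩
    · exact ⟨false, by simp [hside, h]⟩
  have hmonoside : ∀ b, StrictMonoOn f (side b) ∨ StrictAntiOn f (side b) := by
    intro b
    cases b <;> rcases huni with ⟨h1, h2⟩ | ⟨h1, h2⟩ <;> simp only [hside, if_true, if_false,
      Bool.false_eq_true, ite_false, ite_true]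
    · right; exact h2
    · left; exact h2
    · left; exact h1
    · right; exact h1
  have hsideJ : ∀ i : ℕ, 0 < i → i < k → ∃ b, f^[i] '' J ⊆ side b := by
    intro i hi0 hik
    by_contra hcon
    push_neg at hcon
    obtain ⟨u, hu, hu'⟩ := not_subset.mp (hcon true)
    obtain ⟨v, hv, hv'⟩ := not_subset.mp (hcon false)
    have hcu : c < u := by
      simp only [hside, if_true, mem_setOf_eq] at hu'
      exact not_le.mp hu'
    have hvc : v < c := by
      simp only [hside, Bool.false_eq_true, if_false, mem_setOf_eq] at hv'
      exact not_le.mp hv'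
    have hK := image_icc_ordConnected (f^[i]) (hfi i) p q
    rw [← hJ] at hK
    have himg : ∀ z : Icc (0:ℝ) 1,
        z.1 ∈ (fun x => ((f^[i] x : Icc (0:ℝ) 1) : ℝ)) '' J → z ∈ f^[i] '' J := by
      rintro z ⟨x, hx, hz⟩
      exact ⟨x, hx, Subtype.ext hz⟩
    have himg' : ∀ z : Icc (0:ℝ) 1, z ∈ f^[i] '' J →
        z.1 ∈ (fun x => ((f^[i] x : Icc (0:ℝ) 1) : ℝ)) '' J := by
      rintro z ⟨x, hx, rfl⟩
      exact ⟨x, hx, rfl⟩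
    have hcmem : c ∈ f^[i] '' J :=
      himg c (hK.out (himg' v hv) (himg' u hu)
        ⟨Subtype.coe_le_coe.mpr hvc.le, Subtype.coe_le_coe.mpr hcu.le⟩)
    have hsub := hoverlap 0 i hi0 hik
    rw [Function.iterate_zero, image_id] at hsub
    have hpc : p ≤ c := by rw [hJ] at hcJ; exact hcJ.1
    have hcq : c ≤ q := by rw [hJ] at hcJ; exact hcJ.2
    rcases lt_or_ge c q with hcq' | hqc
    · rcases le_total u q with h' | h'
      · have huJ : u ∈ J := by rw [hJ]; exact ⟨hpc.trans hcu.le, h'⟩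
        exact (ne_of_gt hcu) (hsub ⟨huJ, hu⟩ ⟨hcJ, hcmem⟩)
      · have hqmem : q ∈ f^[i] '' J :=
          himg q (hK.out (himg' c hcmem) (himg' u hu)
            ⟨Subtype.coe_le_coe.mpr hcq'.le, Subtype.coe_le_coe.mpr h'⟩)
        have hqJ : q ∈ J := by rw [hJ]; exact ⟨hpq.le, le_refl q⟩
        exact (ne_of_gt hcq') (hsub ⟨hqJ, hqmem⟩ ⟨hcJ, hcmem⟩)
    · have hceq : c = q := le_antisymm hcq hqc
      have hpc' : p < c := hceq ▸ hpq
      rcases le_total p v with h' | h'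
      · have hvJ : v ∈ J := by rw [hJ]; exact ⟨h', hvc.le.trans hcq⟩
        exact (ne_of_lt hvc) (hsub ⟨hvJ, hv⟩ ⟨hcJ, hcmem⟩)
      · have hpmem : p ∈ f^[i] '' J :=
          himg p (hK.out (himg' v hv) (himg' c hcmem)
            ⟨Subtype.coe_le_coe.mpr h', Subtype.coe_le_coe.mpr hpc'.le⟩)
        have hpJ : p ∈ J := by rw [hJ]; exact ⟨le_refl p, hpq.le⟩
        exact (ne_of_lt hpc') (hsub ⟨hpJ, hpmem⟩ ⟨hcJ, hcmem⟩)
  have hσ : ∀ i : ℕ, ∃ b, (0 < i → i < k → f^[i] '' J ⊆ side b) := by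
    intro i
    rcases Nat.eq_zero_or_pos i with rfl | hi
    · exact ⟨true, by omega⟩
    rcases lt_or_ge i k with h | h
    · obtain ⟨b, hb⟩ := hsideJ i hi h
      exact ⟨b, fun _ _ => hb⟩
    · exact ⟨true, by omega⟩
  choose σ hσ' using hσ
  -- entropy bound
  rw [coverEntropy]
  refine iSup₂_le fun U hU => ?_
  obtain ⟨V, hV, hVsymm, hVU⟩ := comp_symm_mem_uniformity_sets hU
  obtain ⟨ε, hε, hεV⟩ := Metric.mem_uniformity_dist.mp hV
  obtain ⟨m, hm⟩ := exists_nat_gt (1 / ε)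
  have hm0 : 0 < m := by
    by_contra h
    push_neg at h
    interval_cases m
    simp only [Nat.cast_zero] at hm
    have := one_div_pos.mpr hε
    linarith
  have hmε : 1 / (m : ℝ) < ε := by
    have hm' : (0 : ℝ) < m := by positivity
    rw [div_lt_iff₀ hm']
    rw [div_lt_iff₀ hε] at hm
    nlinarith
  set W : Set ((Icc (0:ℝ) 1) × (Icc (0:ℝ) 1)) := {pp | dist pp.1 pp.2 < ε} with hW
  have hWV : W ⊆ V := fun pp hpp => hεV hpp
  -- THE KEY COVERING BOUND
  have key : ∀ n : ℕ, coverMincard f Y W n ≤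
      ((k * 2 ^ (n / k + 1) * (2 * n * m + 1) : ℕ) : ℕ∞) := by
    intro n
    set T : ℕ := n / k + 1 with hT
    set idx : Icc (0:ℝ) 1 → ℕ := fun x => ⌊x.1 * m⌋₊ with hidx
    have hm' : (0:ℝ) < m := by positivity
    have hidx_mono : Monotone idx := by
      intro x y hxy
      exact Nat.floor_mono (mul_le_mul_of_nonneg_right (Subtype.coe_le_coe.mpr hxy) hm'.le)
    have hidx_bd : ∀ x, idx x ≤ m := by
      intro x
      have h1 : x.1 * m ≤ (m:ℝ) := by nlinarith [x.2.1, x.2.2]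
      calc idx x ≤ ⌊(m:ℝ)⌋₊ := Nat.floor_mono h1
        _ = m := Nat.floor_natCast m
    have hidx_close : ∀ x y : Icc (0:ℝ) 1, idx x = idx y → dist x y < ε := by
      intro x y hxy
      have hx1 : ((idx x : ℕ):ℝ) ≤ x.1 * m := Nat.floor_le (mul_nonneg x.2.1 hm'.le)
      have hx2 : x.1 * m < (idx x) + 1 := Nat.lt_floor_add_one _
      have hy1 : ((idx y : ℕ):ℝ) ≤ y.1 * m := Nat.floor_le (mul_nonneg y.2.1 hm'.le)
      have hy2 : y.1 * m < (idx y) + 1 := Nat.lt_floor_add_one _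
      rw [hxy] at hx1 hx2
      rw [Subtype.dist_eq, Real.dist_eq, abs_sub_lt_iff]
      constructor
      · have h3 : x.1 - y.1 < 1 / m := by rw [lt_div_iff₀ hm']; nlinarith
        linarith
      · have h3 : y.1 - x.1 < 1 / m := by rw [lt_div_iff₀ hm']; nlinarith
        linarith
    set L : ℕ → (Fin T → Bool) → Set (Icc (0:ℝ) 1) := fun i w =>
      (f^[i] '' J) ∩ ⋂ t : Fin T, f^[(k - i) % k + t.1 * k] ⁻¹' side (w t) with hL
    have hbranch : ∀ i, i < k → ∀ w : Fin T → Bool, ∀ j, j < n →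
        ∃ b, ∀ x ∈ L i w, f^[j] x ∈ side b := by
      intro i hik w j hjn
      rcases Nat.eq_zero_or_pos ((i + j) % k) with hz | hpos'
      · obtain ⟨s, hs⟩ := Nat.dvd_of_mod_eq_zero hz
        have hex : ∃ t : Fin T, (k - i) % k + t.1 * k = j := by
          rcases Nat.eq_zero_or_pos i with rfl | hi0
          · have hj : j = s * k := by rw [Nat.mul_comm] at hs; omega
            have h1 : s * k ≤ n := by omega
            have h2 : s ≤ n / k := (Nat.le_div_iff_mul_le hk0).mpr h1
            refine ⟨⟨s, by omega⟩, ?_⟩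
            simp [Nat.sub_zero, Nat.mod_self, hj]
          · have hs1 : 1 ≤ s := by
              rcases Nat.eq_zero_or_pos s with rfl | h
              · omega
              · exact h
            have hmod' : (k - i) % k = k - i := Nat.mod_eq_of_lt (by omega)
            have hkey : (s - 1) * k = s * k - k := by rw [Nat.sub_one_mul]
            have hsk : s * k = k * s := Nat.mul_comm s k
            have hks : k ≤ s * k := Nat.le_mul_of_pos_left k hs1
            have h1 : (s - 1) * k ≤ n := by omega
            have h2 : s - 1 ≤ n / k := (Nat.le_div_iff_mul_le hk0).mpr h1
            refine ⟨⟨s - 1, by omega⟩, ?_⟩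
            rw [hmod', hkey]
            omega
        obtain ⟨t, htj⟩ := hex
        refine ⟨w t, ?_⟩
        intro x hx
        have hx2 := hx.2
        simp only [mem_iInter] at hx2
        have h3 := hx2 t
        rw [htj] at h3
        exact h3
      · refine ⟨σ ((i + j) % k), ?_⟩
        intro x hx
        obtain ⟨z, hz, rfl⟩ := hx.1
        have h1 : f^[j] (f^[i] z) = f^[j + i] z := (Function.iterate_add_apply f j i z).symm
        rw [h1, Nat.add_comm j i]
        exact hσ' ((i+j)%k) hpos' (Nat.mod_lt _ hk0) (hmod (i+j) (mem_image_of_mem _ hz))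
    have hLmono : ∀ i, i < k → ∀ w, ∀ j, j < n →
        MonotoneOn (f^[j]) (L i w) ∨ AntitoneOn (f^[j]) (L i w) := by
      intro i hik w j
      induction j with
      | zero =>
        intro _
        left
        intro x _ y _ hxy
        simpa using hxy
      | succ j ih =>
        intro hjn
        have hj : j < n := by omega
        obtain ⟨b, hb⟩ := hbranch i hik w j hj
        have hit : ∀ z, f^[j+1] z = f (f^[j] z) := fun z => Function.iterate_succ_apply' f j z
        rcases ih hj with hmono | hanti <;> rcases hmonoside b with hf1 | hf1
        · left
          intro x hx y hy hxy
          rw [hit x, hit y]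
          exact hf1.monotoneOn (hb x hx) (hb y hy) (hmono hx hy hxy)
        · right
          intro x hx y hy hxy
          rw [hit x, hit y]
          exact hf1.antitoneOn (hb x hx) (hb y hy) (hmono hx hy hxy)
        · right
          intro x hx y hy hxy
          rw [hit x, hit y]
          exact hf1.monotoneOn (hb y hy) (hb x hx) (hanti hx hy hxy)
        · left
          intro x hx y hy hxy
          rw [hit x, hit y]
          exact hf1.antitoneOn (hb y hy) (hb x hx) (hanti hx hy hxy)
    set g : ℕ → Icc (0:ℝ) 1 → ℕ := fun j x => idx (f^[j] x) with hgdef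
    have hgmono : ∀ i, i < k → ∀ w, ∀ j, j < n →
        MonotoneOn (g j) (L i w) ∨ AntitoneOn (g j) (L i w) := by
      intro i hik w j hj
      rcases hLmono i hik w j hj with h | h
      · left; exact hidx_mono.comp_monotoneOn h
      · right; exact hidx_mono.comp_antitoneOn h
    have hphi := fun (i' : Fin k) (w : Fin T → Bool) =>
      phi_counting (L i'.1 w) n m g (fun j hj => hgmono i'.1 i'.2 w j hj)
        (fun j _ x _ => hidx_bd _)
    choose φ hφ1 hφ2 using hphi
    have hx0 : (0:ℝ) ∈ Icc (0:ℝ) 1 := ⟨le_refl 0, zero_le_one⟩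
    set rep : (Fin k × (Fin T → Bool) × ↥(Finset.Icc (-(n * m : ℤ)) (n * m))) → Icc (0:ℝ) 1 :=
      fun iwv => if h : ∃ x, x ∈ L iwv.1.1 iwv.2.1 ∧ φ iwv.1 iwv.2.1 x = iwv.2.2.1
        then h.choose else ⟨0, hx0⟩ with hrep
    set s : Finset (Icc (0:ℝ) 1) := Finset.image rep Finset.univ with hsdef
    have hcover : IsDynCoverOf f Y W n s := by
      intro y hy
      rw [hY] at hy
      simp only [Finset.mem_range, mem_iUnion, exists_prop] at hy
      obtain ⟨i, hik, hyim⟩ := hy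
      set i' : Fin k := ⟨i, hik⟩ with hi'
      set w : Fin T → Bool := fun t => decide (f^[(k - i) % k + t.1 * k] y ≤ c) with hw
      have hyL : y ∈ L i w := by
        refine ⟨hyim, ?_⟩
        simp only [mem_iInter]
        intro t
        simp only [mem_preimage, hw]
        by_cases hyc : f^[(k - i) % k + t.1 * k] y ≤ c
        · rw [decide_eq_true hyc]
          simp [hside, hyc]
        · rw [decide_eq_false hyc]
          simp only [hside, Bool.false_eq_true, if_false, mem_setOf_eq]
          exact le_of_not_ge hyc
      have hvmem : φ i' w y ∈ Finset.Icc (-(n * m : ℤ)) (n * m) := hφ1 i' w y hyL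
      set v : ↥(Finset.Icc (-(n * m : ℤ)) (n * m)) := ⟨φ i' w y, hvmem⟩ with hv
      have hex : ∃ x, x ∈ L i'.1 w ∧ φ i' w x = v.1 := ⟨y, hyL, rfl⟩
      have hrepx : rep (i', w, v) ∈ L i'.1 w ∧ φ i' w (rep (i', w, v)) = v.1 := by
        rw [hrep]
        simp only []
        rw [dif_pos hex]
        exact hex.choose_spec
      obtain ⟨hxL, hxφ⟩ := hrepx
      have hphieq : φ i' w (rep (i', w, v)) = φ i' w y := hxφ
      have hitin : ∀ j, j < n → g j (rep (i', w, v)) = g j y :=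
        fun j hj => hφ2 i' w (rep (i', w, v)) hxL y hyL hphieq j hj
      refine ⟨rep (i', w, v), Finset.mem_image_of_mem rep (Finset.mem_univ _), ?_⟩
      rw [mem_dynEntourage]
      intro j hj
      show dist (f^[j] y) (f^[j] (rep (i', w, v))) < ε
      exact hidx_close _ _ (hitin j hj).symm
    have hcard := hcover.coverMincard_le_card
    refine hcard.trans ?_
    have h1 : s.card ≤ k * 2 ^ T * (2 * n * m + 1) := by
      have h2 : s.card ≤ Fintype.card
          (Fin k × (Fin T → Bool) × ↥(Finset.Icc (-(n * m : ℤ)) (n * m))) := by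
        rw [hsdef]
        exact (Finset.card_image_le).trans (le_of_eq (Finset.card_univ))
      have h3 : Fintype.card (Fin k × (Fin T → Bool) × ↥(Finset.Icc (-(n * m : ℤ)) (n * m)))
          = k * 2 ^ T * (2 * n * m + 1) := by
        rw [Fintype.card_prod, Fintype.card_prod, Fintype.card_fin, Fintype.card_fun,
          Fintype.card_fin, Fintype.card_bool, Fintype.card_coe, Int.card_Icc]
        have h4 : ((n * m : ℤ) + 1 - (-(n * m : ℤ))) = ((2 * n * m + 1 : ℕ) : ℤ) := by
          push_cast; ring
        rw [h4, Int.toNat_natCast]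
        ring
      exact h2.trans_eq h3
    exact_mod_cast Nat.cast_le.mpr h1
  -- conclude
  have hstep : ∀ n : ℕ, 0 < n → coverEntropyEntourage f Y U ≤
      ENNReal.log ((k * 2 ^ (n / k + 1) * (2 * n * m + 1) : ℕ) : ENNReal) / (n : EReal) := by
    intro n hn
    have h1 : coverEntropyEntourage f Y U ≤ coverEntropyEntourage f Y (SetRel.comp V V) :=
      coverEntropyEntourage_antitone f Y hVU
    have h2 : coverEntropyEntourage f Y (SetRel.comp V V) ≤
        ENNReal.log (coverMincard f Y V n : ENNReal) / (n : EReal) :=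
      by haveI := hVsymm; exact coverEntropyEntourage_le_log_coverMincard_div hmapsTo hn.ne'
    refine h1.trans (h2.trans ?_)
    refine EReal.monotone_div_right_of_nonneg (Nat.cast_nonneg' n) (ENNReal.log_monotone ?_)
    exact_mod_cast (coverMincard_antitone f Y n hWV).trans (key n)
  have htend : Filter.Tendsto (fun n : ℕ =>
      ENNReal.log ((k * 2 ^ (n / k + 1) * (2 * n * m + 1) : ℕ) : ENNReal) / (n : EReal))
      Filter.atTop (nhds ((Real.log 2 / k : ℝ) : EReal)) := by
    have heq : ∀ᶠ n : ℕ in Filter.atTop,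
        ((Real.log ((k : ℝ) * 2 ^ (n / k + 1) * (2 * n * m + 1)) / n : ℝ) : EReal)
        = ENNReal.log ((k * 2 ^ (n / k + 1) * (2 * n * m + 1) : ℕ) : ENNReal) / (n : EReal) := by
      filter_upwards [Filter.eventually_ge_atTop 1] with n hn
      have hB0 : ((k * 2 ^ (n / k + 1) * (2 * n * m + 1) : ℕ) : ENNReal) ≠ 0 := by
        have : (0:ℕ) < k * 2 ^ (n / k + 1) * (2 * n * m + 1) := by positivity
        exact_mod_cast this.ne'
      have hBtop : ((k * 2 ^ (n / k + 1) * (2 * n * m + 1) : ℕ) : ENNReal) ≠ ⊤ :=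
        ENNReal.natCast_ne_top _
      rw [ENNReal.log_pos_real hB0 hBtop, ENNReal.toReal_natCast, EReal.coe_div,
        EReal.coe_coe_eq_natCast]
      congr 2
      push_cast
      ring
    have h1 := tendsto_logB k m hk hm0
    have h2 : Filter.Tendsto (fun n : ℕ =>
        ((Real.log ((k : ℝ) * 2 ^ (n / k + 1) * (2 * n * m + 1)) / n : ℝ) : EReal))
        Filter.atTop (nhds ((Real.log 2 / k : ℝ) : EReal)) := by
      rw [EReal.tendsto_coe]
      exact h1
    exact h2.congr' heq
  refine ge_of_tendsto htend ?_
  filter_upwards [Filter.eventually_ge_atTop 1] with n hn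
  exact hstep n hn
end

section
/- Let a ∈ (1,3) and let f_a(x) = a·x·(1 − x). If x ∈ [0,1] and n ≥ 1 satisfy f_a^n(x) = x, then x = 0 or x = (a − 1)/a. In particular, f_a has exactly two periodic orbits in [0,1], namely the two fixed points. -/
open Set

theorem periodic_points_of_quadratic_low_parameter
    (a : ℝ) (ha : a ∈ Ioo (1 : ℝ) 3)
    (f : ℝ → ℝ) (hf : ∀ x, f x = a * x * (1 - x)) :
    (∀ x ∈ Icc (0 : ℝ) 1, ∀ n : ℕ, 1 ≤ n → f^[n] x = x →
      x = 0 ∨ x = (a - 1) / a) ∧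
    f 0 = 0 ∧ f ((a - 1) / a) = (a - 1) / a := by
  obtain ⟨ha1, ha3⟩ := ha
  have ha0 : (0:ℝ) < a := by linarith
  have hf0 : f 0 = 0 := by rw [hf]; ring
  have hfp : f ((a - 1) / a) = (a - 1) / a := by
    rw [hf]; field_simp; ring
  refine ⟨?_, hf0, hfp⟩
  -- key contraction lemma
  have key : ∀ z : ℝ, 0 < z → z ≤ a / 4 → a * z ≠ a - 1 →
      (a * f (f z) - (a - 1))^2 < (a * z - (a - 1))^2 := by
    intro z hz0 hz4 hzp
    have hy4 : 4 * (a * z) ≤ a ^ 2 := by nlinarith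
    have hQ : 0 < (a*z)^2 - (a+1)*(a*z) + (a+1) := by
      nlinarith [sq_nonneg (2*(a*z) - (a+1))]
    have hC : 0 < 2 - (a+1)*(a*z) + (a+1)*(a*z)^2 - (a*z)^3 := by
      rcases le_or_gt (a*z) 1 with h1 | h1
      · have hy0 : 0 < a * z := by positivity
        nlinarith [mul_nonneg (mul_nonneg (by linarith : (0:ℝ) ≤ 3 - a) hy0.le)
            (by linarith : (0:ℝ) ≤ 1 - a*z),
          mul_nonneg (sq_nonneg (a*z - 2/3)) (by linarith : (0:ℝ) ≤ 8/3 - a*z)]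
      · nlinarith [mul_nonneg (by nlinarith : (0:ℝ) ≤ a^2 - 4*(a*z))
            (by positivity : (0:ℝ) ≤ a*z),
          sq_nonneg (a*z - 1), sq_nonneg (a - 2),
          mul_nonneg (sq_nonneg (a*z - 1)) (by linarith : (0:ℝ) ≤ a*z),
          mul_nonneg (mul_nonneg (by linarith : (0:ℝ) ≤ a - 1)
            (by linarith : (0:ℝ) ≤ a*z - 1)) (by linarith : (0:ℝ) ≤ a*z)]
    have hS : 0 < (a * z - (a - 1))^2 := by
      have : a * z - (a - 1) ≠ 0 := sub_ne_zero.mpr hzp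
      positivity
    have hid : (a * z - (a - 1))^2 - (a * f (f z) - (a - 1))^2 =
        a * z * (a * z - (a - 1))^2 * ((a*z)^2 - (a+1)*(a*z) + (a+1)) *
          (2 - (a+1)*(a*z) + (a+1)*(a*z)^2 - (a*z)^3) := by
      simp only [hf]; ring
    nlinarith [mul_pos (mul_pos (mul_pos (mul_pos ha0 hz0) hS) hQ) hC]
  -- range facts
  have ha41 : a / 4 < 1 := by linarith
  have hmap : ∀ y : ℝ, 0 < y → y < 1 → 0 < f y ∧ f y ≤ a / 4 := by
    intro y h0 h1
    rw [hf]
    constructor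
    · have : 0 < 1 - y := by linarith
      positivity
    · nlinarith [sq_nonneg (y - 1/2)]
  intro x hx n hn hper
  rcases eq_or_ne x 0 with rfl | hx0
  · exact Or.inl rfl
  have hiter0 : ∀ k : ℕ, f^[k] (0:ℝ) = 0 := by
    intro k; induction k with
    | zero => rfl
    | succ k ih => rw [Function.iterate_succ_apply', ih, hf0]
  rcases eq_or_ne x 1 with rfl | hx1
  · exfalso
    obtain ⟨m, rfl⟩ := Nat.exists_eq_add_of_le hn
    rw [add_comm, Function.iterate_succ_apply, hf, show a * 1 * (1-1) = 0 by ring,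
      hiter0] at hper
    exact hx0 hper.symm
  have hx0' : 0 < x := lt_of_le_of_ne hx.1 (Ne.symm hx0)
  have hx1' : x < 1 := lt_of_le_of_ne hx.2 hx1
  -- all iterates stay in (0,1)
  have hit : ∀ k : ℕ, 0 < f^[k] x ∧ f^[k] x < 1 := by
    intro k; induction k with
    | zero => exact ⟨hx0', hx1'⟩
    | succ k ih =>
      rw [Function.iterate_succ_apply']
      obtain ⟨h0, h4⟩ := hmap _ ih.1 ih.2
      exact ⟨h0, lt_of_le_of_lt h4 ha41⟩
  -- iterates from step 1 are in (0, a/4]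
  have hmem : ∀ k : ℕ, f^[k+1] x ≤ a / 4 := by
    intro k
    rw [Function.iterate_succ_apply']
    exact (hmap _ (hit k).1 (hit k).2).2
  -- x itself is in (0, a/4]
  have hx4 : x ≤ a / 4 := by
    obtain ⟨m, rfl⟩ := Nat.exists_eq_add_of_le hn
    rw [add_comm] at hper
    calc x = f^[m+1] x := hper.symm
    _ ≤ a / 4 := hmem m
  right
  by_contra hxp
  have hxp' : a * x ≠ a - 1 := by
    intro h
    exact hxp (by field_simp [eq_div_iff (ne_of_gt ha0)]; linarith)
  have hppos : f ((a-1)/a) = (a-1)/a := hfp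
  have hz : ∀ k : ℕ, f^[2*(k+1)] x = f (f (f^[2*k] x)) := by
    intro k
    rw [show 2*(k+1) = (2*k+1)+1 by ring, Function.iterate_succ_apply',
      Function.iterate_succ_apply']
  have desc : ∀ k : ℕ, (a * f^[2*(k+1)] x - (a-1))^2 < (a * x - (a-1))^2 ∨
      f^[2*(k+1)] x = (a-1)/a := by
    intro k
    induction k with
    | zero =>
      rw [hz 0]
      simp only [Nat.mul_zero, Function.iterate_zero_apply]
      exact Or.inl (key x hx0' hx4 hxp')
    | succ k ih =>
      rw [hz (k+1)]
      rcases ih with hlt | heq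
      · rcases eq_or_ne (a * f^[2*(k+1)] x) (a - 1) with hzz | hzz
        · right
          have hzp : f^[2*(k+1)] x = (a-1)/a := by
            field_simp [eq_div_iff (ne_of_gt ha0)]; linarith
          rw [hzp, hfp, hfp]
        · left
          have h0 : 0 < f^[2*(k+1)] x := (hit _).1
          have h4 : f^[2*(k+1)] x ≤ a / 4 := by
            have := hmem (2*k+1)
            rwa [show 2*k+1+1 = 2*(k+1) by ring] at this
          exact lt_trans (key _ h0 h4 hzz) hlt
      · right
        rw [heq, hfp, hfp]
  obtain ⟨m, rfl⟩ := Nat.exists_eq_add_of_le hn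
  have hper2 : f^[2*(1+m)] x = x := by
    rw [two_mul, Function.iterate_add_apply, hper, hper]
  rcases desc m with hlt | heq
  · rw [show 2*(m+1) = 2*(1+m) by ring, hper2] at hlt
    exact lt_irrefl _ hlt
  · rw [show 2*(m+1) = 2*(1+m) by ring, hper2] at heq
    exact hxp heq
end

section
/- Let a > 4 and let f_a(x) = a·x·(1 − x). Let Λ = {x ∈ [0,1] : f_a^n(x) ∈ [0,1] for all n ≥ 0} be the set of points whose forward orbit stays in [0,1]. Then Λ is a compact f_a-invariant set and the restriction of f_a to Λ is topologically conjugate to the full one-sided shift on two symbols: there is a homeomorphism φ from Λ onto the product space {0,1}^ℕ (with the product topology) such that φ ∘ f_a = σ ∘ φ on Λ, where σ is the shift map σ(ω)(n) = ω(n+1). -/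
open Set Real

noncomputable def rr (a : ℝ) : ℝ := Real.sqrt (1 - 4 / a)
noncomputable def pp (a : ℝ) : ℝ := (1 - rr a) / 2
noncomputable def qq (a : ℝ) : ℝ := (1 + rr a) / 2
def fa (a : ℝ) : ℝ → ℝ := fun x => a * x * (1 - x)

lemma apos {a : ℝ} (ha : 4 < a) : 0 < a := by linarith

lemma rr_sq {a : ℝ} (ha : 4 < a) : rr a ^ 2 = 1 - 4 / a := by
  rw [rr, Real.sq_sqrt]
  have h1 : 4 / a < 1 := (div_lt_one (apos ha)).2 ha
  linarith

lemma rr_pos {a : ℝ} (ha : 4 < a) : 0 < rr a := by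
  apply Real.sqrt_pos.2
  have h1 : 4 / a < 1 := (div_lt_one (apos ha)).2 ha
  linarith

lemma rr_lt_one {a : ℝ} (ha : 4 < a) : rr a < 1 := by
  nlinarith [rr_sq ha, rr_pos ha, div_pos (by norm_num : (0:ℝ) < 4) (apos ha)]

lemma pp_pos {a : ℝ} (ha : 4 < a) : 0 < pp a := by
  have := rr_lt_one ha; rw [pp]; linarith

lemma pp_lt_half {a : ℝ} (ha : 4 < a) : pp a < 1/2 := by
  have := rr_pos ha; rw [pp]; linarith

lemma half_lt_qq {a : ℝ} (ha : 4 < a) : 1/2 < qq a := by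
  have := rr_pos ha; rw [qq]; linarith

lemma qq_lt_one {a : ℝ} (ha : 4 < a) : qq a < 1 := by
  have := rr_lt_one ha; rw [qq]; linarith

lemma pp_lt_qq {a : ℝ} (ha : 4 < a) : pp a < qq a :=
  lt_trans (pp_lt_half ha) (half_lt_qq ha)

lemma factor {a : ℝ} (ha : 4 < a) (w : ℝ) :
    1 - fa a w = a * (w - pp a) * (w - qq a) := by
  have h2 := rr_sq ha
  have h0 : a ≠ 0 := ne_of_gt (apos ha)
  have h3 : a * rr a ^ 2 = a - 4 := by rw [rr_sq ha]; field_simp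
  rw [fa, pp, qq]
  linear_combination h3 / 4

lemma le_one_iff {a : ℝ} (ha : 4 < a) (w : ℝ) :
    fa a w ≤ 1 ↔ w ≤ pp a ∨ qq a ≤ w := by
  have hf := factor ha w
  have hpq := pp_lt_qq ha
  have ha0 := apos ha
  constructor
  · intro h
    by_contra hc
    push_neg at hc
    have hA : 0 < w - pp a := sub_pos.2 hc.1
    have hB : 0 < qq a - w := sub_pos.2 hc.2
    nlinarith [mul_pos ha0 (mul_pos hA hB)]
  · rintro (h | h)
    · have hA : 0 ≤ pp a - w := sub_nonneg.2 h
      have hB : 0 ≤ qq a - w := le_of_lt (sub_pos.2 (lt_of_le_of_lt h hpq))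
      nlinarith [mul_nonneg (mul_nonneg ha0.le hA) hB]
    · have hA : 0 ≤ w - pp a := sub_nonneg.2 (le_of_lt (lt_of_lt_of_le hpq h))
      have hB : 0 ≤ w - qq a := sub_nonneg.2 h
      nlinarith [mul_nonneg (mul_nonneg ha0.le hA) hB]

lemma fa_nonneg {a : ℝ} (ha : 4 < a) {w : ℝ} (h0 : 0 ≤ w) (h1 : w ≤ 1) : 0 ≤ fa a w := by
  rw [fa]
  have := apos ha
  exact mul_nonneg (mul_nonneg this.le h0) (by linarith)

noncomputable def Hc : ℝ → ℝ := fun x => 2 / π * Real.arcsin (Real.sqrt x)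
noncomputable def sn : ℝ → ℝ := fun θ => Real.sin (π * θ / 2) ^ 2

lemma Hc_mem {x : ℝ} (h0 : 0 ≤ x) (h1 : x ≤ 1) : Hc x ∈ Icc (0:ℝ) 1 := by
  have hs0 : 0 ≤ Real.arcsin (Real.sqrt x) := Real.arcsin_nonneg.2 (Real.sqrt_nonneg x)
  have hs1 : Real.arcsin (Real.sqrt x) ≤ π / 2 := Real.arcsin_le_pi_div_two _
  have hπ : (0:ℝ) < π := Real.pi_pos
  constructor
  · exact mul_nonneg (by positivity) hs0
  · rw [Hc]
    calc 2 / π * Real.arcsin (Real.sqrt x) ≤ 2 / π * (π / 2) := by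
          apply mul_le_mul_of_nonneg_left hs1 (by positivity)
      _ = 1 := by field_simp
lemma Hc_mono {x y : ℝ} (h0 : 0 ≤ x) (hxy : x < y) (h1 : y ≤ 1) : Hc x < Hc y := by
  have hπ : (0:ℝ) < π := Real.pi_pos
  apply mul_lt_mul_of_pos_left _ (by positivity : (0:ℝ) < 2 / π)
  apply Real.strictMonoOn_arcsin
  · constructor
    · linarith [Real.sqrt_nonneg x]
    · exact Real.sqrt_le_one.2 (by linarith)
  · constructor
    · linarith [Real.sqrt_nonneg y]
    · exact Real.sqrt_le_one.2 h1
  · exact Real.sqrt_lt_sqrt h0 hxy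

lemma sn_Hc {x : ℝ} (h0 : 0 ≤ x) (h1 : x ≤ 1) : sn (Hc x) = x := by
  have hπ : (0:ℝ) ≠ π := ne_of_lt Real.pi_pos
  have harg : π * (2 / π * Real.arcsin (Real.sqrt x)) / 2 = Real.arcsin (Real.sqrt x) := by
    field_simp
  rw [sn, Hc, harg, Real.sin_arcsin (by linarith [Real.sqrt_nonneg x]) (Real.sqrt_le_one.2 h1),
    Real.sq_sqrt h0]

lemma sn_mono : StrictMonoOn sn (Icc (0:ℝ) 1) := by
  intro x hx y hy hxy
  have hπ : (0:ℝ) < π := Real.pi_pos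
  have h1 : 0 ≤ Real.sin (π * x / 2) := by
    apply Real.sin_nonneg_of_nonneg_of_le_pi
    · nlinarith [hx.1]
    · nlinarith [hx.2]
  have h2 : Real.sin (π * x / 2) < Real.sin (π * y / 2) := by
    apply Real.strictMonoOn_sin
    · constructor <;> nlinarith [hx.1, hx.2]
    · constructor <;> nlinarith [hy.1, hy.2]
    · nlinarith
  rw [sn, sn]
  exact pow_lt_pow_left₀ h2 h1 (by norm_num)

lemma hasDerivAt_sn (θ : ℝ) :
    HasDerivAt sn (π * (Real.sin (π * θ / 2) * Real.cos (π * θ / 2))) θ := by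
  have h1 : HasDerivAt (fun t : ℝ => π * t / 2) (π / 2) θ := by
    simpa using ((hasDerivAt_id θ).const_mul π).div_const 2
  have h2 : HasDerivAt (fun t : ℝ => Real.sin (π * t / 2))
      (Real.cos (π * θ / 2) * (π / 2)) θ := (Real.hasDerivAt_sin _).comp θ h1
  have h3 := h2.pow 2
  exact h3.congr_deriv (by ring)

lemma hasDerivAt_Hc {y : ℝ} (h0 : 0 < y) (h1 : y < 1) :
    HasDerivAt Hc (1 / (π * (Real.sqrt y * Real.sqrt (1 - y)))) y := by
  have hπ : (0:ℝ) < π := Real.pi_pos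
  have hs : HasDerivAt (fun x : ℝ => Real.sqrt x) (1 / (2 * Real.sqrt y)) y :=
    Real.hasDerivAt_sqrt (ne_of_gt h0)
  have hy0 : 0 < Real.sqrt y := Real.sqrt_pos.2 h0
  have hy1 : Real.sqrt y < 1 := by
    rw [show (1:ℝ) = Real.sqrt 1 by simp]
    exact Real.sqrt_lt_sqrt h0.le h1
  have harc : HasDerivAt Real.arcsin (1 / Real.sqrt (1 - Real.sqrt y ^ 2)) (Real.sqrt y) :=
    Real.hasDerivAt_arcsin (by linarith) (ne_of_lt hy1)
  have hcomp := (harc.comp y hs).const_mul (2 / π)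
  have hsq : Real.sqrt y ^ 2 = y := Real.sq_sqrt h0.le
  rw [hsq] at hcomp
  have h1y : (0:ℝ) < Real.sqrt (1 - y) := Real.sqrt_pos.2 (by linarith)
  exact hcomp.congr_deriv (by field_simp)

lemma continuous_fa (a : ℝ) : Continuous (fa a) := by
  unfold fa; continuity

lemma continuous_Hc : Continuous Hc := by
  unfold Hc; exact continuous_const.mul (Real.continuous_arcsin.comp Real.continuous_sqrt)

lemma continuous_sn : Continuous sn := by
  unfold sn; continuity

lemma mvtG {a : ℝ} (ha : 4 < a) {u v : ℝ} (hu : 0 ≤ u) (huv : u < v) (hv : v ≤ 1)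
    (s : ℝ) (hsign : ∀ z ∈ Ioo u v, Real.sqrt (1 - fa a z) ≤ s * (1 - 2*z))
    (hlt : ∀ z ∈ Ioo u v, fa a z < 1) :
    Real.sqrt a * (Hc v - Hc u) ≤ s * (Hc (fa a v) - Hc (fa a u)) := by
  have ha0 : (0:ℝ) < a := apos ha
  have hπ : (0:ℝ) < π := Real.pi_pos
  have hv0 : 0 ≤ v := le_trans hu huv.le
  have hu1 : u ≤ 1 := le_trans huv.le hv
  set A := Hc u with hA
  set B := Hc v with hB
  have hAB : A < B := Hc_mono hu huv hv
  have hAmem := Hc_mem hu hu1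
  have hBmem := Hc_mem hv0 hv
  set ψ : ℝ → ℝ := fun θ => s * Hc (fa a (sn θ)) with hψdef
  have hψcont : Continuous ψ :=
    continuous_const.mul (continuous_Hc.comp ((continuous_fa a).comp continuous_sn))
  -- derivative at interior points
  have hderiv : ∀ θ ∈ Ioo A B, ∃ D : ℝ, HasDerivAt ψ D θ ∧ Real.sqrt a ≤ D := by
    intro θ hθ
    have hθ0 : 0 ≤ θ := le_trans hAmem.1 hθ.1.le
    have hθ1 : θ ≤ 1 := le_trans hθ.2.le hBmem.2
    set z := sn θ with hz
    have hsnA : sn A = u := sn_Hc hu hu1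
    have hsnB : sn B = v := sn_Hc hv0 hv
    have hzmem : z ∈ Ioo u v := by
      constructor
      · rw [← hsnA]; exact sn_mono ⟨hAmem.1, hAmem.2⟩ ⟨hθ0, hθ1⟩ hθ.1
      · rw [← hsnB]; exact sn_mono ⟨hθ0, hθ1⟩ ⟨hBmem.1, hBmem.2⟩ hθ.2
    have hz0 : 0 < z := lt_of_le_of_lt hu hzmem.1
    have hz1 : z < 1 := lt_of_lt_of_le hzmem.2 hv
    set y := fa a z with hy
    have hy1 : y < 1 := hlt z hzmem
    have hy0 : 0 < y := by
      rw [hy, fa]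
      have := mul_pos (mul_pos ha0 hz0) (by linarith : (0:ℝ) < 1 - z)
      linarith
    have hsn' := hasDerivAt_sn θ
    have hfa' : HasDerivAt (fa a) (a * (1 - 2*z)) z := by
      have hid := hasDerivAt_id z
      have hmul1 : HasDerivAt (fun x : ℝ => a * x) a z := by simpa using hid.const_mul a
      have hsub : HasDerivAt (fun x : ℝ => 1 - x) (-1) z := by
        exact ((hasDerivAt_const z (1:ℝ)).sub hid).congr_deriv (by simp)
      have := hmul1.mul hsub
      exact this.congr_deriv (by ring)
    have hH' := hasDerivAt_Hc hy0 hy1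
    have hchain : HasDerivAt (fun t => Hc (fa a (sn t)))
        (1 / (π * (Real.sqrt y * Real.sqrt (1 - y))) *
          (a * (1 - 2*z) * (π * (Real.sin (π * θ / 2) * Real.cos (π * θ / 2))))) θ :=
      by have := hH'.comp θ (hfa'.comp θ hsn'); exact this
    have hψ' := hchain.const_mul s
    refine ⟨_, hψ', ?_⟩
    -- now bound the derivative value
    have hsinpos : 0 ≤ Real.sin (π * θ / 2) := by
      apply Real.sin_nonneg_of_nonneg_of_le_pi
      · nlinarith
      · nlinarith
    have hsin : Real.sin (π * θ / 2) = Real.sqrt z := by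
      rw [hz, sn, Real.sqrt_sq hsinpos]
    have hcospos : 0 ≤ Real.cos (π * θ / 2) := by
      apply Real.cos_nonneg_of_mem_Icc
      constructor
      · nlinarith
      · nlinarith
    have hcos : Real.cos (π * θ / 2) = Real.sqrt (1 - z) := by
      have h1z : 1 - z = Real.cos (π * θ / 2) ^ 2 := by
        have := Real.sin_sq_add_cos_sq (π * θ / 2)
        rw [hz, sn]; linarith
      rw [h1z, Real.sqrt_sq hcospos]
    have hsqy : Real.sqrt y = Real.sqrt a * (Real.sqrt z * Real.sqrt (1 - z)) := by
      rw [hy, fa, Real.sqrt_mul (by nlinarith : 0 ≤ a * z) (1 - z),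
        Real.sqrt_mul ha0.le z]
      ring
    have hsz : (0:ℝ) < Real.sqrt z := Real.sqrt_pos.2 hz0
    have hsz1 : (0:ℝ) < Real.sqrt (1 - z) := Real.sqrt_pos.2 (by linarith)
    have hsy1 : (0:ℝ) < Real.sqrt (1 - y) := Real.sqrt_pos.2 (by linarith)
    have hsa : (0:ℝ) < Real.sqrt a := Real.sqrt_pos.2 ha0
    have haa : Real.sqrt a * Real.sqrt a = a := Real.mul_self_sqrt ha0.le
    have hval : s * (1 / (π * (Real.sqrt y * Real.sqrt (1 - y))) *
          (a * (1 - 2*z) * (π * (Real.sin (π * θ / 2) * Real.cos (π * θ / 2))))) =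
        Real.sqrt a * (s * (1 - 2*z) / Real.sqrt (1 - y)) := by
      rw [hsin, hcos, hsqy]
      field_simp
      linear_combination (-1 * s * (1 - 2*z)) * haa
    rw [hval]
    have hquot : 1 ≤ s * (1 - 2*z) / Real.sqrt (1 - y) := by
      rw [le_div_iff₀ hsy1]
      have := hsign z hzmem
      rw [← hy] at this
      linarith
    exact le_mul_of_one_le_right hsa.le hquot
  -- mean value inequality
  have hmvt := Convex.mul_sub_le_image_sub_of_le_deriv (convex_Icc A B)
    (hψcont.continuousOn)
    (fun θ hθ => by
      rw [interior_Icc] at hθ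
      obtain ⟨D, hD, _⟩ := hderiv θ hθ
      exact hD.differentiableAt.differentiableWithinAt)
    (fun θ hθ => by
      rw [interior_Icc] at hθ
      obtain ⟨D, hD, hDb⟩ := hderiv θ hθ
      rw [hD.deriv]
      exact hDb)
    A (left_mem_Icc.2 hAB.le) B (right_mem_Icc.2 hAB.le) hAB.le
  have heA : ψ A = s * Hc (fa a u) := by rw [hψdef]; simp only []; rw [sn_Hc hu hu1]
  have heB : ψ B = s * Hc (fa a v) := by rw [hψdef]; simp only []; rw [sn_Hc hv0 hv]
  rw [heA, heB] at hmvt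
  linarith [hmvt]

lemma dichotomy {a : ℝ} (ha : 4 < a) {u v : ℝ} (huv : u ≤ v)
    (hm : ∀ w ∈ Icc u v, fa a w ≤ 1) : v ≤ pp a ∨ qq a ≤ u := by
  by_contra hc
  push_neg at hc
  obtain ⟨h1, h2⟩ := hc
  have hpq := pp_lt_qq ha
  have ha0 := apos ha
  set m := (pp a + qq a) / 2 with hm'
  set w := max (min m v) u with hw'
  have hw1 : u ≤ w := le_max_right _ _
  have hw2 : w ≤ v := max_le (min_le_right _ _) huv
  have hpw : pp a < w := lt_of_lt_of_le (lt_min (by rw [hm']; linarith) h1) (le_max_left _ _)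
  have hwq : w < qq a := max_lt (lt_of_le_of_lt (min_le_left _ _) (by rw [hm']; linarith)) h2
  have hfw := hm w ⟨hw1, hw2⟩
  have hfac := factor ha w
  nlinarith [mul_pos (sub_pos.2 hpw) (sub_pos.2 hwq)]

lemma key {a : ℝ} (ha : 4 < a) {u v : ℝ} (hu : 0 ≤ u) (huv : u < v) (hv : v ≤ 1)
    (hm : ∀ w ∈ Icc u v, fa a w ≤ 1) :
    Real.sqrt a * (Hc v - Hc u) ≤ |Hc (fa a v) - Hc (fa a u)| := by
  have ha0 := apos ha
  have hpq := pp_lt_qq ha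
  have hph := pp_lt_half ha
  have hhq := half_lt_qq ha
  rcases dichotomy ha huv.le hm with hd | hd
  · -- increasing branch, s = 1
    have h := mvtG ha hu huv hv 1
      (fun z hz => by
        have hzp : z < pp a := lt_of_lt_of_le hz.2 hd
        have hz0 : 0 < z := lt_of_le_of_lt hu hz.1
        have h2z : 0 ≤ 1 - 2*z := by linarith
        have hb : 1 - fa a z ≤ (1 - 2*z)^2 := by
          rw [fa]; nlinarith [mul_pos hz0 (show (0:ℝ) < 1 - z from by linarith)]
        calc Real.sqrt (1 - fa a z) ≤ Real.sqrt ((1 - 2*z)^2) := Real.sqrt_le_sqrt hb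
          _ = 1 - 2*z := Real.sqrt_sq h2z
          _ = 1 * (1 - 2*z) := by ring)
      (fun z hz => by
        have hzp : z < pp a := lt_of_lt_of_le hz.2 hd
        have hfac := factor ha z
        nlinarith [mul_pos (sub_pos.2 hzp) (sub_pos.2 (lt_trans hzp hpq))])
    calc Real.sqrt a * (Hc v - Hc u) ≤ 1 * (Hc (fa a v) - Hc (fa a u)) := h
      _ = Hc (fa a v) - Hc (fa a u) := one_mul _
      _ ≤ |Hc (fa a v) - Hc (fa a u)| := le_abs_self _
  · -- decreasing branch, s = -1
    have h := mvtG ha hu huv hv (-1)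
      (fun z hz => by
        have hzq : qq a < z := lt_of_le_of_lt hd hz.1
        have hz1 : z < 1 := lt_of_lt_of_le hz.2 hv
        have h2z : 0 ≤ 2*z - 1 := by linarith
        have hz0 : 0 < z := by linarith
        have hb : 1 - fa a z ≤ (2*z - 1)^2 := by
          rw [fa]; nlinarith [mul_pos hz0 (show (0:ℝ) < 1 - z from by linarith)]
        calc Real.sqrt (1 - fa a z) ≤ Real.sqrt ((2*z - 1)^2) := Real.sqrt_le_sqrt hb
          _ = 2*z - 1 := Real.sqrt_sq h2z
          _ = -1 * (1 - 2*z) := by ring)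
      (fun z hz => by
        have hzq : qq a < z := lt_of_le_of_lt hd hz.1
        have hfac := factor ha z
        nlinarith [mul_pos (sub_pos.2 (lt_trans hpq hzq)) (sub_pos.2 hzq)])
    calc Real.sqrt a * (Hc v - Hc u) ≤ -1 * (Hc (fa a v) - Hc (fa a u)) := h
      _ = -(Hc (fa a v) - Hc (fa a u)) := by ring
      _ ≤ |Hc (fa a v) - Hc (fa a u)| := neg_le_abs _

noncomputable def gg (a : ℝ) (b : Fin 2) (y : ℝ) : ℝ :=
  if b = 0 then (1 - Real.sqrt (1 - 4*y/a))/2 else (1 + Real.sqrt (1 - 4*y/a))/2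

def Ib (a : ℝ) (b : Fin 2) : Set ℝ := if b = 0 then Icc 0 (pp a) else Icc (qq a) 1

lemma isClosed_Ib (a : ℝ) (b : Fin 2) : IsClosed (Ib a b) := by
  unfold Ib; split <;> exact isClosed_Icc

lemma Ib_subset {a : ℝ} (ha : 4 < a) (b : Fin 2) : Ib a b ⊆ Icc (0:ℝ) 1 := by
  have h1 := pp_lt_half ha
  have h2 := half_lt_qq ha
  have h3 := pp_pos ha
  have h4 := qq_lt_one ha
  unfold Ib; split <;> intro x hx <;> constructor <;> [skip; skip; skip; skip] <;>
    first
      | exact hx.1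
      | exact hx.2
      | linarith [hx.1, hx.2]

lemma gg_spec {a : ℝ} (ha : 4 < a) {y : ℝ} (hy : y ∈ Icc (0:ℝ) 1) (b : Fin 2) :
    fa a (gg a b y) = y ∧ gg a b y ∈ Ib a b := by
  have ha0 := apos ha
  set s := Real.sqrt (1 - 4*y/a) with hs
  have hy4 : 4*y/a ≤ 4/a := by
    rw [div_le_div_iff₀ ha0 ha0]
    nlinarith [hy.2]
  have h4a : 4/a < 1 := (div_lt_one ha0).2 ha
  have harg : 0 ≤ 1 - 4*y/a := by linarith
  have hs2 : s^2 = 1 - 4*y/a := Real.sq_sqrt harg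
  have hs2' : a * s^2 = a - 4*y := by
    rw [hs2]
    field_simp
  have hs0 : 0 ≤ s := Real.sqrt_nonneg _
  have hs1 : s ≤ 1 := by
    rw [show (1:ℝ) = Real.sqrt 1 by simp]
    apply Real.sqrt_le_sqrt
    have : 0 ≤ 4*y/a := div_nonneg (by linarith [hy.1]) ha0.le
    linarith
  have hsr : rr a ≤ s := by
    apply Real.sqrt_le_sqrt
    linarith
  have hfa : ∀ t : ℝ, t = (1 - s)/2 ∨ t = (1 + s)/2 → fa a t = y := by
    rintro t (rfl | rfl) <;>
    · rw [fa]
      linear_combination (-1/4) * hs2'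
  by_cases hb : b = 0
  · subst hb
    refine ⟨hfa _ (Or.inl (by rw [gg, if_pos rfl])), ?_⟩
    rw [gg, if_pos rfl, Ib, if_pos rfl, pp]
    constructor
    · rw [← hs]; linarith
    · rw [← hs]; linarith
  · refine ⟨hfa _ (Or.inr (by rw [gg, if_neg hb])), ?_⟩
    rw [gg, if_neg hb, Ib, if_neg hb, qq]
    constructor
    · rw [← hs]; linarith
    · rw [← hs]; linarith

noncomputable def pt (a : ℝ) : ℕ → (ℕ → Fin 2) → ℝ
  | 0, ω => gg a (ω 0) 0
  | (N+1), ω => gg a (ω 0) (pt a N (fun k => ω (k+1)))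

lemma pt_mem {a : ℝ} (ha : 4 < a) : ∀ N (ω : ℕ → Fin 2), pt a N ω ∈ Ib a (ω 0) := by
  intro N
  induction N with
  | zero => intro ω; exact (gg_spec ha (by constructor <;> norm_num) (ω 0)).2
  | succ N ih =>
    intro ω
    exact (gg_spec ha (Ib_subset ha _ (ih (fun k => ω (k+1)))) (ω 0)).2

lemma pt_mem_Icc {a : ℝ} (ha : 4 < a) (N : ℕ) (ω : ℕ → Fin 2) : pt a N ω ∈ Icc (0:ℝ) 1 :=
  Ib_subset ha _ (pt_mem ha N ω)

lemma pt_step {a : ℝ} (ha : 4 < a) (N : ℕ) (ω : ℕ → Fin 2) :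
    fa a (pt a (N+1) ω) = pt a N (fun k => ω (k+1)) := by
  rw [pt]
  exact (gg_spec ha (pt_mem_Icc ha N _) (ω 0)).1

lemma pt_zero {a : ℝ} (ha : 4 < a) (ω : ℕ → Fin 2) : fa a (pt a 0 ω) = 0 := by
  rw [pt]
  exact (gg_spec ha (by constructor <;> norm_num) (ω 0)).1

lemma pt_iter {a : ℝ} (ha : 4 < a) :
    ∀ k m (ω : ℕ → Fin 2), (fa a)^[k] (pt a (k + m) ω) = pt a m (fun j => ω (j + k)) := by
  intro k
  induction k with
  | zero => intro m ω; simp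
  | succ k ih =>
    intro m ω
    have h1 : k + 1 + m = (k + m) + 1 := by omega
    rw [h1, Function.iterate_succ_apply, pt_step ha]
    rw [ih m (fun j => ω (j+1))]
    congr 1

lemma pt_past {a : ℝ} (ha : 4 < a) (N : ℕ) (ω : ℕ → Fin 2) {n : ℕ} (hn : N < n) :
    (fa a)^[n] (pt a N ω) = 0 := by
  obtain ⟨j, rfl⟩ : ∃ j, n = (N + 1) + j := ⟨n - (N+1), by omega⟩
  have hN := pt_iter ha N 0 ω
  rw [Nat.add_zero] at hN
  have hz : ∀ j, (fa a)^[j] (0:ℝ) = 0 := by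
    intro j
    induction j with
    | zero => simp
    | succ j ihj => rw [Function.iterate_succ_apply, show fa a 0 = 0 by rw [fa]; ring, ihj]
  rw [show (N+1) + j = j + (N+1) by omega, Function.iterate_add_apply,
    Function.iterate_succ_apply', hN, pt_zero ha, hz]

lemma pt_in_Lambda {a : ℝ} (ha : 4 < a) (N : ℕ) (ω : ℕ → Fin 2) (n : ℕ) :
    (fa a)^[n] (pt a N ω) ∈ Icc (0:ℝ) 1 := by
  rcases le_or_gt n N with h | h
  · obtain ⟨m, rfl⟩ : ∃ m, N = n + m := ⟨N - n, by omega⟩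
    rw [pt_iter ha n m ω]
    exact pt_mem_Icc ha m _
  · rw [pt_past ha N ω h]
    constructor <;> norm_num

lemma pt_itin {a : ℝ} (ha : 4 < a) (N : ℕ) (ω : ℕ → Fin 2) {k : ℕ} (hk : k ≤ N) :
    (fa a)^[k] (pt a N ω) ∈ Ib a (ω k) := by
  obtain ⟨m, rfl⟩ : ∃ m, N = k + m := ⟨N - k, by omega⟩
  rw [pt_iter ha k m ω]
  have := pt_mem ha m (fun j => ω (j + k))
  simpa using this

lemma fin2cases (b : Fin 2) : b = 0 ∨ b = 1 := by omega

theorem quadratic_gt_four_conjugate_to_full_shift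
    (a : ℝ) (ha : 4 < a)
    (f : ℝ → ℝ) (hf : ∀ x, f x = a * x * (1 - x))
    (Λ : Set ℝ) (hΛ : Λ = {x ∈ Icc (0 : ℝ) 1 | ∀ n : ℕ, f^[n] x ∈ Icc (0 : ℝ) 1}) :
    IsCompact Λ ∧
    ∃ (hinv : MapsTo f Λ Λ) (φ : Λ ≃ₜ (ℕ → Fin 2)),
      ∀ x : Λ, φ (hinv.restrict f Λ Λ x) = fun n => φ x (n + 1) := by
  have hfaeq : f = fa a := funext fun x => (hf x).trans rfl
  subst hfaeq
  subst hΛ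
  have ha0 := apos ha
  have hpq := pp_lt_qq ha
  set S : Set ℝ := {x ∈ Icc (0 : ℝ) 1 | ∀ n : ℕ, (fa a)^[n] x ∈ Icc (0 : ℝ) 1} with hS
  have hmem : ∀ x, x ∈ S ↔ ∀ n : ℕ, (fa a)^[n] x ∈ Icc (0:ℝ) 1 := by
    intro x
    constructor
    · exact fun h => h.2
    · intro h
      exact ⟨by simpa using h 0, h⟩
  have hSeq : S = Icc (0:ℝ) 1 ∩ ⋂ n : ℕ, ((fa a)^[n]) ⁻¹' (Icc (0:ℝ) 1) := by
    ext x
    simp only [hS, mem_setOf_eq, mem_inter_iff, mem_iInter, mem_preimage]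
  have hclosed : IsClosed S := by
    rw [hSeq]
    exact isClosed_Icc.inter (isClosed_iInter fun n =>
      IsClosed.preimage ((continuous_fa a).iterate n) isClosed_Icc)
  have hSsub : S ⊆ Icc (0:ℝ) 1 := fun x hx => hx.1
  have hcompact : IsCompact S := IsCompact.of_isClosed_subset isCompact_Icc hclosed hSsub
  refine ⟨hcompact, ?_⟩
  have hinv : MapsTo (fa a) S S := by
    intro x hx
    rw [hmem]
    intro n
    rw [← Function.iterate_succ_apply]
    exact (hmem x).1 hx (n+1)
  set c : ℝ → Fin 2 := fun t => if t ≤ pp a then (0 : Fin 2) else 1 with hc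
  -- dichotomy on S
  have hside : ∀ x ∈ S, ∀ n : ℕ, (fa a)^[n] x ≤ pp a ∨ qq a ≤ (fa a)^[n] x := by
    intro x hx n
    have h2 : fa a ((fa a)^[n] x) ≤ 1 := by
      have := (hmem x).1 hx (n+1)
      rw [Function.iterate_succ_apply'] at this
      exact this.2
    exact (le_one_iff ha _).1 h2
  -- injectivity core
  have hexpand : ∀ x ∈ S, ∀ y ∈ S, x < y →
      (∀ n : ℕ, c ((fa a)^[n] x) = c ((fa a)^[n] y)) → False := by
    intro x hx y hy hxy hit
    have hx0 : x ∈ Icc (0:ℝ) 1 := hx.1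
    have hy0 : y ∈ Icc (0:ℝ) 1 := hy.1
    set d := Hc y - Hc x with hd
    have hd0 : 0 < d := sub_pos.2 (Hc_mono hx0.1 hxy hy0.2)
    have hsa : (0:ℝ) < Real.sqrt a := Real.sqrt_pos.2 ha0
    have hL : ∀ n : ℕ, Real.sqrt a ^ n * d ≤
        |Hc ((fa a)^[n] y) - Hc ((fa a)^[n] x)| := by
      intro n
      induction n with
      | zero => simpa using le_abs_self d
      | succ n ihn =>
        set u := (fa a)^[n] x with hu
        set v := (fa a)^[n] y with hv
        have hu01 : u ∈ Icc (0:ℝ) 1 := (hmem x).1 hx n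
        have hv01 : v ∈ Icc (0:ℝ) 1 := (hmem y).1 hy n
        have hpow : 0 < Real.sqrt a ^ n * d := mul_pos (pow_pos hsa n) hd0
        have hne : u ≠ v := by
          intro he
          rw [he, sub_self, abs_zero] at ihn
          linarith
        have hboth : (u ≤ pp a ∧ v ≤ pp a) ∨ (qq a ≤ u ∧ qq a ≤ v) := by
          have hcu := hit n
          rcases hside x hx n with h1 | h1
          · left
            refine ⟨h1, ?_⟩
            rcases hside y hy n with h2 | h2
            · exact h2
            · exfalso
              have e1 : c u = 0 := if_pos h1
              by_cases h3 : v ≤ pp a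
              · exact absurd h3 (by linarith)
              · have e2 : c v = 1 := if_neg h3
                rw [e1, e2] at hcu
                exact absurd hcu (by decide)
          · right
            refine ⟨h1, ?_⟩
            rcases hside y hy n with h2 | h2
            · exfalso
              have h3 : ¬ u ≤ pp a := by linarith
              have e1 : c u = 1 := if_neg h3
              have e2 : c v = 0 := if_pos h2
              rw [e1, e2] at hcu
              exact absurd hcu (by decide)
            · exact h2
        have hsucc : (fa a)^[n+1] x = fa a u := by rw [Function.iterate_succ_apply', hu]
        have hsucc' : (fa a)^[n+1] y = fa a v := by rw [Function.iterate_succ_apply', hv]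
        rcases lt_or_gt_of_ne hne with h | h
        · -- u < v
          have hm : ∀ w ∈ Icc u v, fa a w ≤ 1 := by
            intro w hw
            apply (le_one_iff ha w).2
            rcases hboth with ⟨_, h2⟩ | ⟨h1, _⟩
            · exact Or.inl (le_trans hw.2 h2)
            · exact Or.inr (le_trans h1 hw.1)
          have hk := key ha hu01.1 h hv01.2 hm
          have habs : Hc v - Hc u = |Hc v - Hc u| :=
            (abs_of_pos (sub_pos.2 (Hc_mono hu01.1 h hv01.2))).symm
          rw [hsucc, hsucc']
          calc Real.sqrt a ^ (n+1) * d = Real.sqrt a * (Real.sqrt a ^ n * d) := by ring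
            _ ≤ Real.sqrt a * |Hc v - Hc u| :=
                mul_le_mul_of_nonneg_left (by rw [abs_sub_comm] at ihn ⊢; exact ihn) hsa.le
            _ = Real.sqrt a * (Hc v - Hc u) := by rw [← habs]
            _ ≤ |Hc (fa a v) - Hc (fa a u)| := hk
        · -- v < u
          have hm : ∀ w ∈ Icc v u, fa a w ≤ 1 := by
            intro w hw
            apply (le_one_iff ha w).2
            rcases hboth with ⟨h1, _⟩ | ⟨_, h2⟩
            · exact Or.inl (le_trans hw.2 h1)
            · exact Or.inr (le_trans h2 hw.1)
          have hk := key ha hv01.1 h hu01.2 hm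
          have habs : Hc u - Hc v = |Hc u - Hc v| :=
            (abs_of_pos (sub_pos.2 (Hc_mono hv01.1 h hu01.2))).symm
          rw [hsucc, hsucc']
          calc Real.sqrt a ^ (n+1) * d = Real.sqrt a * (Real.sqrt a ^ n * d) := by ring
            _ ≤ Real.sqrt a * |Hc u - Hc v| := by
                apply mul_le_mul_of_nonneg_left ?_ hsa.le
                rw [show |Hc u - Hc v| = |Hc v - Hc u| from abs_sub_comm _ _]
                exact ihn
            _ = Real.sqrt a * (Hc u - Hc v) := by rw [← habs]
            _ ≤ |Hc (fa a u) - Hc (fa a v)| := hk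
            _ = |Hc (fa a v) - Hc (fa a u)| := abs_sub_comm _ _
    -- bound
    have hb : ∀ n : ℕ, Real.sqrt a ^ n * d ≤ 1 := by
      intro n
      refine (hL n).trans ?_
      have h1 := Hc_mem ((hmem y).1 hy n).1 ((hmem y).1 hy n).2
      have h2 := Hc_mem ((hmem x).1 hx n).1 ((hmem x).1 hx n).2
      rw [abs_le]
      constructor <;> [linarith [h1.1, h2.2]; linarith [h1.2, h2.1]]
    have h2a : (2:ℝ) ≤ Real.sqrt a := by
      rw [show (2:ℝ) = Real.sqrt 4 by
        rw [show (4:ℝ) = 2^2 by norm_num, Real.sqrt_sq (by norm_num : (0:ℝ) ≤ 2)]]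
      exact Real.sqrt_le_sqrt ha.le
    obtain ⟨n, hn⟩ := pow_unbounded_of_one_lt (1/d) (by norm_num : (1:ℝ) < 2)
    have hlt : 1 < 2^n * d := by
      rw [div_lt_iff₀ hd0] at hn
      linarith
    have hle : (2:ℝ)^n * d ≤ Real.sqrt a ^ n * d :=
      mul_le_mul_of_nonneg_right (pow_le_pow_left₀ (by norm_num) h2a n) hd0.le
    linarith [hb n]
  -- the coding map on the subtype
  set φ₀ : S → (ℕ → Fin 2) := fun x n => c ((fa a)^[n] (x : ℝ)) with hφ₀
  have hinj : Function.Injective φ₀ := by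
    intro x y hxy
    have hit : ∀ n, c ((fa a)^[n] (x:ℝ)) = c ((fa a)^[n] (y:ℝ)) := fun n => congrFun hxy n
    rcases lt_trichotomy (x:ℝ) (y:ℝ) with h | h | h
    · exact (hexpand _ x.2 _ y.2 h hit).elim
    · exact Subtype.ext h
    · exact (hexpand _ y.2 _ x.2 h (fun n => (hit n).symm)).elim
  have hsurj : Function.Surjective φ₀ := by
    intro ω
    set V : ℕ → Set ℝ := fun N => S ∩ ⋂ k ∈ {k : ℕ | k ≤ N}, ((fa a)^[k]) ⁻¹' (Ib a (ω k))
      with hV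
    have hVclosed : ∀ N, IsClosed (V N) := fun N =>
      hclosed.inter (isClosed_biInter fun k _ =>
        IsClosed.preimage ((continuous_fa a).iterate k) (isClosed_Ib a _))
    have hVne : ∀ N, (V N).Nonempty := by
      intro N
      refine ⟨pt a N ω, (hmem _).2 (pt_in_Lambda ha N ω), ?_⟩
      rw [mem_iInter₂]
      intro k hk
      exact pt_itin ha N ω hk
    have hVanti : ∀ N, V (N+1) ⊆ V N := by
      intro N z hz
      refine ⟨hz.1, ?_⟩
      rw [mem_iInter₂]
      intro k hk
      have := hz.2
      rw [mem_iInter₂] at this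
      exact this k (by simp only [mem_setOf_eq] at hk ⊢; omega)
    obtain ⟨z, hz⟩ := IsCompact.nonempty_iInter_of_sequence_nonempty_isCompact_isClosed V
      hVanti hVne (IsCompact.of_isClosed_subset hcompact (hVclosed 0) inter_subset_left)
      hVclosed
    rw [mem_iInter] at hz
    have hzS : z ∈ S := (hz 0).1
    refine ⟨⟨z, hzS⟩, ?_⟩
    funext n
    have hzn : (fa a)^[n] z ∈ Ib a (ω n) := by
      have := (hz n).2
      rw [mem_iInter₂] at this
      exact this n (by simp)
    show c ((fa a)^[n] z) = ω n
    rcases fin2cases (ω n) with hb | hb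
    · rw [hb] at hzn ⊢
      rw [Ib, if_pos rfl] at hzn
      exact if_pos hzn.2
    · rw [hb] at hzn ⊢
      rw [Ib, if_neg (by decide)] at hzn
      exact if_neg (by linarith [hzn.1])
  have hcont : Continuous φ₀ := by
    apply continuous_pi
    intro n
    have hcn : Continuous fun x : S => (fa a)^[n] (x : ℝ) :=
      ((continuous_fa a).iterate n).comp continuous_subtype_val
    have hS0 : IsClosed {x : S | (fa a)^[n] (x:ℝ) ≤ pp a} := isClosed_le hcn continuous_const
    have hS1 : IsClosed {x : S | qq a ≤ (fa a)^[n] (x:ℝ)} := isClosed_le continuous_const hcn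
    have hcompl : {x : S | (fa a)^[n] (x:ℝ) ≤ pp a}ᶜ = {x : S | qq a ≤ (fa a)^[n] (x:ℝ)} := by
      ext x
      simp only [mem_compl_iff, mem_setOf_eq, not_le]
      constructor
      · intro h
        rcases hside (x:ℝ) x.2 n with h' | h'
        · exact absurd h' (not_le.2 h)
        · exact h'
      · intro h
        rcases hside (x:ℝ) x.2 n with h' | h'
        · linarith
        · linarith
    have hc_eq0 : ∀ t : ℝ, c t = 0 ↔ t ≤ pp a := by
      intro t
      by_cases h : t ≤ pp a
      · simp only [hc, if_pos h, h]
      · simp only [hc, if_neg h, h, iff_false]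
        decide
    have hc_eq1 : ∀ t : ℝ, c t = 1 ↔ ¬ t ≤ pp a := by
      intro t
      by_cases h : t ≤ pp a
      · simp only [hc, if_pos h, h, not_true, iff_false]
        decide
      · simp only [hc, if_neg h, h, not_false_iff, iff_true]
    rw [continuous_discrete_rng]
    intro b
    rcases fin2cases b with hb | hb
    · subst hb
      have hpre : (fun x : S => φ₀ x n) ⁻¹' {0} = {x : S | (fa a)^[n] (x:ℝ) ≤ pp a} := by
        ext x
        rw [mem_preimage, mem_singleton_iff, mem_setOf_eq]
        exact hc_eq0 _
      rw [hpre, ← isClosed_compl_iff, hcompl]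
      exact hS1
    · subst hb
      have hpre : (fun x : S => φ₀ x n) ⁻¹' {1} = {x : S | (fa a)^[n] (x:ℝ) ≤ pp a}ᶜ := by
        ext x
        rw [mem_preimage, mem_singleton_iff, mem_compl_iff, mem_setOf_eq]
        exact hc_eq1 _
      rw [hpre]
      exact hS0.isOpen_compl
  haveI : CompactSpace S := isCompact_iff_compactSpace.mp hcompact
  set e : S ≃ (ℕ → Fin 2) := Equiv.ofBijective φ₀ ⟨hinj, hsurj⟩ with he
  have hce : Continuous e := hcont
  refine ⟨hinv, hce.homeoOfEquivCompactToT2, ?_⟩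
  intro x
  funext n
  show φ₀ (hinv.restrict (fa a) S S x) n = φ₀ x (n+1)
  show c ((fa a)^[n] (fa a (x:ℝ))) = c ((fa a)^[n+1] (x:ℝ))
  rw [Function.iterate_succ_apply]
end
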